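/- arXiv:2004.01659 — 4 statements merged into one kernel-verified Lean document; each statement's English description precedes it below -/
import Mathlib

section
/- For any permutation π of {1,...,n} and positive integers k and l, the binomial identity C(kl+n-des(π)-1, n) = Σ_{στ=π} C(k+n-des(σ)-1, n)·C(l+n-des(τ)-1, n) holds, where the sum is over all pairs of permutations σ, τ in S_n with στ = π. -/
/-- The value of the permutation at position `j` (1-indexed), shifted by 1,
with the convention that out-of-range positions (in particular `j = 0`) give `0`. -/
def pval {n : ℕ} (π : Equiv.Perm (Fin n)) (j : ℕ) : ℕ :=
  if h : 1 ≤ j ∧ j ≤ n then ((π ⟨j - 1, by omega⟩ : Fin n) : ℕ) + 1 else 0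

/-- Number of descents of `π`: indices `i ∈ {1,…,n-1}` with `π(i) > π(i+1)`. -/
def des {n : ℕ} (π : Equiv.Perm (Fin n)) : ℕ :=
  ((Finset.Icc 1 (n - 1)).filter (fun i => pval π (i + 1) < pval π i)).card

/-- Number of left peaks of `π`: indices `i ∈ {1,…,n-1}` with
`π(i-1) < π(i) > π(i+1)`, with the convention `π(0) = 0`. -/
def lpk {n : ℕ} (π : Equiv.Perm (Fin n)) : ℕ :=
  ((Finset.Icc 1 (n - 1)).filter
    (fun i => pval π (i - 1) < pval π i ∧ pval π (i + 1) < pval π i)).card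

/-- Number of interior peaks of `π`: indices `i ∈ {2,…,n-1}` with
`π(i-1) < π(i) > π(i+1)`. -/
def pk {n : ℕ} (π : Equiv.Perm (Fin n)) : ℕ :=
  ((Finset.Icc 2 (n - 1)).filter
    (fun i => pval π (i - 1) < pval π i ∧ pval π (i + 1) < pval π i)).card

open Finset

namespace StmtAux

variable {n : ℕ}

/-- value of a tuple at a ℕ index, `0` out of range. -/
def tval {n m : ℕ} (v : Fin n → Fin m) (i : ℕ) : ℕ :=
  if h : i < n then (v ⟨i, h⟩ : ℕ) else 0

lemma tval_of_lt {n m : ℕ} (v : Fin n → Fin m) {i : ℕ} (h : i < n) :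
    tval v i = (v ⟨i, h⟩ : ℕ) := by simp [tval, h]

lemma tval_lt {n m : ℕ} (v : Fin n → Fin m) {i : ℕ} (h : i < n) : tval v i < m := by
  rw [tval_of_lt v h]; exact (v ⟨i, h⟩).isLt

lemma pval_of_lt (σ : Equiv.Perm (Fin n)) {i : ℕ} (h : i < n) :
    pval σ (i + 1) = (σ ⟨i, h⟩ : ℕ) + 1 := by
  have h1 : 1 ≤ i + 1 ∧ i + 1 ≤ n := by omega
  simp only [pval, dif_pos h1, Nat.add_sub_cancel]

/-- descent of σ at ℕ position i (between positions i and i+1, 0-indexed). -/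
def dsc (σ : Equiv.Perm (Fin n)) (i : ℕ) : Prop := pval σ (i + 2) < pval σ (i + 1)

instance (σ : Equiv.Perm (Fin n)) : DecidablePred (dsc σ) := fun _ => by
  unfold dsc; infer_instance

lemma dsc_iff (σ : Equiv.Perm (Fin n)) {i : ℕ} (h : i + 1 < n) (h0 : i < n) :
    dsc σ i ↔ (σ ⟨i + 1, h⟩ : ℕ) < (σ ⟨i, h0⟩ : ℕ) := by
  unfold dsc
  rw [pval_of_lt σ h0, show i + 2 = (i+1) + 1 from rfl, pval_of_lt σ h]
  omega

/-- number of descents of σ strictly before position j -/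
def D (σ : Equiv.Perm (Fin n)) (j : ℕ) : ℕ :=
  ((Finset.range (n - 1)).filter (fun i => dsc σ i ∧ i < j)).card

lemma des_eq (σ : Equiv.Perm (Fin n)) : des σ = ((range (n - 1)).filter (dsc σ)).card := by
  rw [des]
  apply Finset.card_bij' (fun i _ => i - 1) (fun j _ => j + 1)
  case hi =>
    intro a ha
    simp only [mem_filter, mem_Icc] at ha
    obtain ⟨⟨h1, h2⟩, h3⟩ := ha
    simp only [mem_filter, mem_range]
    have hn : 2 ≤ n := by omega
    refine ⟨by omega, ?_⟩
    unfold dsc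
    have e1 : a - 1 + 2 = a + 1 := by omega
    have e2 : a - 1 + 1 = a := by omega
    rw [e1, e2]
    exact h3
  case hj =>
    intro j hj
    simp only [mem_filter, mem_range] at hj
    obtain ⟨h1, h2⟩ := hj
    simp only [mem_filter, mem_Icc]
    unfold dsc at h2
    exact ⟨⟨by omega, by omega⟩, h2⟩
  case left_inv =>
    intro a ha
    simp only [mem_filter, mem_Icc] at ha
    omega
  case right_inv =>
    intro j _
    omega

lemma D_eq_des (σ : Equiv.Perm (Fin n)) {j : ℕ} (h : n - 1 ≤ j) : D σ j = des σ := by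
  rw [des_eq, D]
  congr 1
  apply filter_congr
  intro i hi
  simp only [mem_range] at hi
  simp only [and_iff_left_iff_imp, iff_iff_implies_and_implies]
  constructor
  · exact fun h' => h'.1
  · exact fun h' => ⟨h', by omega⟩

lemma D_mono (σ : Equiv.Perm (Fin n)) {a b : ℕ} (h : a ≤ b) : D σ a ≤ D σ b := by
  apply card_le_card
  intro i hi
  simp only [mem_filter] at hi ⊢
  exact ⟨hi.1, hi.2.1, by omega⟩

lemma D_le_add (σ : Equiv.Perm (Fin n)) {a b : ℕ} (h : a ≤ b) : D σ b ≤ D σ a + (b - a) := by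
  have hsub : (range (n - 1)).filter (fun i => dsc σ i ∧ i < b) ⊆
      ((range (n - 1)).filter (fun i => dsc σ i ∧ i < a)) ∪ Ico a b := by
    intro i hi
    simp only [mem_filter, mem_union, mem_Ico] at hi ⊢
    rcases Nat.lt_or_ge i a with h' | h'
    · exact Or.inl ⟨hi.1, hi.2.1, h'⟩
    · exact Or.inr ⟨h', hi.2.2⟩
  calc D σ b ≤ (((range (n - 1)).filter (fun i => dsc σ i ∧ i < a)) ∪ Ico a b).card :=
        card_le_card hsub
    _ ≤ D σ a + (Ico a b).card := card_union_le _ _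
    _ = D σ a + (b - a) := by rw [Nat.card_Ico]

lemma D_le_self (σ : Equiv.Perm (Fin n)) (j : ℕ) : D σ j ≤ j := by
  have : (range (n - 1)).filter (fun i => dsc σ i ∧ i < j) ⊆ range j := by
    intro i hi
    simp only [mem_filter] at hi
    simp only [mem_range]
    exact hi.2.2
  simpa [D] using card_le_card this

lemma D_succ_of (σ : Equiv.Perm (Fin n)) {i : ℕ} (h : i < n - 1) (hd : dsc σ i) :
    D σ (i + 1) = D σ i + 1 := by
  unfold D
  have hins : (range (n - 1)).filter (fun x => dsc σ x ∧ x < i + 1) =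
      insert i ((range (n - 1)).filter (fun x => dsc σ x ∧ x < i)) := by
    ext x
    simp only [mem_filter, mem_insert, mem_range]
    constructor
    · rintro ⟨h1, h2, h3⟩
      rcases Nat.lt_or_ge x i with h' | h'
      · exact Or.inr ⟨h1, h2, h'⟩
      · exact Or.inl (by omega)
    · rintro (rfl | ⟨h1, h2, h3⟩)
      · exact ⟨h, hd, by omega⟩
      · exact ⟨h1, h2, by omega⟩
  rw [hins, card_insert_of_notMem]
  simp only [mem_filter]
  omega

lemma D_succ_not (σ : Equiv.Perm (Fin n)) {i : ℕ} (hd : ¬ dsc σ i) :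
    D σ (i + 1) = D σ i := by
  unfold D
  congr 1
  apply filter_congr
  intro x hx
  constructor
  · rintro ⟨h1, h2⟩
    refine ⟨h1, ?_⟩
    rcases Nat.lt_or_ge x i with h' | h'
    · exact h'
    · exfalso; have : x = i := by omega
      exact hd (this ▸ h1)
  · rintro ⟨h1, h2⟩
    exact ⟨h1, by omega⟩

/-- chain condition: values along σ weakly increase, strictly at descents of σ -/
def chain {m : ℕ} (σ : Equiv.Perm (Fin n)) (v : Fin n → Fin m) : Prop :=
  ∀ i ∈ range (n - 1), tval v i ≤ tval v (i + 1) ∧ (dsc σ i → tval v i < tval v (i + 1))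

instance {m : ℕ} (σ : Equiv.Perm (Fin n)) : DecidablePred (chain (m := m) σ) := fun _ => by
  unfold chain; infer_instance

def sm {n N : ℕ} (e : Fin n → Fin N) : Prop :=
  ∀ i ∈ range (n - 1), tval e i < tval e (i + 1)

instance {N : ℕ} : DecidablePred (sm (n := n) (N := N)) := fun _ => by
  unfold sm; infer_instance

lemma chain_mono {m : ℕ} {σ : Equiv.Perm (Fin n)} {v : Fin n → Fin m} (h : chain σ v)
    {a b : ℕ} (hab : a ≤ b) (hb : b < n) : tval v a ≤ tval v b := by
  induction b, hab using Nat.le_induction with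
  | base => exact le_refl _
  | succ b hab ih =>
    have hb' : b < n := by omega
    have hbr : b ∈ range (n - 1) := by simp only [mem_range]; omega
    exact le_trans (ih hb') (h b hbr).1

lemma D_zero (σ : Equiv.Perm (Fin n)) : D σ 0 = 0 := by
  unfold D
  rw [filter_false_of_mem, card_empty]
  intro x _ hx
  omega

lemma chain_lb {m : ℕ} {σ : Equiv.Perm (Fin n)} {v : Fin n → Fin m} (h : chain σ v)
    {j : ℕ} (hj : j < n) : D σ j ≤ tval v j := by
  induction j with
  | zero => simp [D_zero]
  | succ j ih =>
    have hj' : j < n := by omega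
    have hjr : j ∈ range (n - 1) := by simp only [mem_range]; omega
    by_cases hd : dsc σ j
    · have h1 : D σ (j + 1) = D σ j + 1 := D_succ_of σ (by omega) hd
      have h2 := (h j hjr).2 hd
      have := ih hj'
      omega
    · have h1 : D σ (j + 1) = D σ j := D_succ_not σ hd
      have h2 := (h j hjr).1
      have := ih hj'
      omega

lemma sort_eq_iff_chain {m : ℕ} (σ : Equiv.Perm (Fin n)) (g : Fin n → Fin m) :
    Tuple.sort g = σ ↔ chain σ (g ∘ σ) := by
  rw [show (Tuple.sort g = σ) ↔ (σ = Tuple.sort g) from eq_comm, Tuple.eq_sort_iff]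
  constructor
  · rintro ⟨hmono, htie⟩ i hi
    simp only [mem_range] at hi
    have hi1 : i + 1 < n := by omega
    have hi0 : i < n := by omega
    have hle : (⟨i, hi0⟩ : Fin n) ≤ ⟨i + 1, hi1⟩ := by simp only [Fin.le_def]; omega
    have hmle := hmono hle
    rw [Fin.le_def] at hmle
    have hw : tval (g ∘ σ) i ≤ tval (g ∘ σ) (i + 1) := by
      rw [tval_of_lt _ hi0, tval_of_lt _ hi1]
      exact hmle
    refine ⟨hw, fun hd => ?_⟩
    rw [tval_of_lt _ hi0, tval_of_lt _ hi1]
    rcases Nat.lt_or_ge ((g ∘ σ) ⟨i, hi0⟩ : ℕ) ((g ∘ σ) ⟨i + 1, hi1⟩ : ℕ) with h' | h'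
    · exact h'
    · exfalso
      have heq : (g ∘ σ) ⟨i, hi0⟩ = (g ∘ σ) ⟨i + 1, hi1⟩ := by
        apply Fin.ext
        omega
      have hlt : (⟨i, hi0⟩ : Fin n) < ⟨i + 1, hi1⟩ := by simp only [Fin.lt_def]; omega
      have htl := htie _ _ hlt heq
      rw [Fin.lt_def] at htl
      rw [dsc_iff σ hi1 hi0] at hd
      omega
  · intro hc
    constructor
    · apply monotone_iff_forall_lt.mpr
      intro a b hab
      rw [Fin.lt_def] at hab
      have := chain_mono hc (Nat.le_of_lt hab) b.isLt
      rw [tval_of_lt _ a.isLt, tval_of_lt _ b.isLt] at this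
      simp only [Fin.eta] at this
      rw [Fin.le_def]
      exact this
    · intro a b hab heq
      rw [Fin.lt_def] at hab
      have key : ∀ c, (hc1 : a.1 < c) → ∀ (hc2 : c < n),
          tval (g ∘ σ) a.1 = tval (g ∘ σ) c → (σ a : ℕ) < (σ ⟨c, hc2⟩ : ℕ) := by
        intro c hc1
        induction c, hc1 using Nat.le_induction with
        | base =>
          intro hc2 hteq
          simp only [Nat.succ_eq_add_one] at hc2 hteq ⊢
          have ha1 : a.1 + 1 < n := hc2
          have har : a.1 ∈ range (n - 1) := by simp only [mem_range]; omega
          have hnd : ¬ dsc σ a.1 := by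
            intro hd
            have := (hc a.1 har).2 hd
            omega
          rw [dsc_iff σ ha1 a.isLt] at hnd
          push_neg at hnd
          have hne : σ ⟨a.1, a.isLt⟩ ≠ σ ⟨a.1 + 1, ha1⟩ := by
            intro h'
            have := σ.injective h'
            simp only [Fin.mk.injEq] at this
            omega
          have : (σ ⟨a.1, a.isLt⟩ : ℕ) ≠ (σ ⟨a.1 + 1, ha1⟩ : ℕ) := fun h' => hne (Fin.ext h')
          simp only [Fin.eta] at hnd this ⊢
          omega
        | succ c hac ih =>
          intro hc2 hteq
          try simp only [Nat.succ_eq_add_one] at hc2 hteq ⊢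
          have hcn : c < n := by omega
          have hteqc : tval (g ∘ σ) a.1 = tval (g ∘ σ) c := by
            have h1 := chain_mono hc (show a.1 ≤ c by omega) hcn
            have h2 := chain_mono hc (show c ≤ c + 1 by omega) hc2
            omega
          have ih' := ih hcn hteqc
          have hcr : c ∈ range (n - 1) := by simp only [mem_range]; omega
          have hnd : ¬ dsc σ c := by
            intro hd
            have := (hc c hcr).2 hd
            omega
          rw [dsc_iff σ hc2 hcn] at hnd
          push_neg at hnd
          have hne : σ ⟨c, hcn⟩ ≠ σ ⟨c + 1, hc2⟩ := by
            intro h'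
            have := σ.injective h'
            simp only [Fin.mk.injEq] at this
            omega
          have hne' : (σ ⟨c, hcn⟩ : ℕ) ≠ (σ ⟨c + 1, hc2⟩ : ℕ) := fun h' => hne (Fin.ext h')
          omega
      have hteq : tval (g ∘ σ) a.1 = tval (g ∘ σ) b.1 := by
        rw [tval_of_lt _ a.isLt, tval_of_lt _ b.isLt]
        simp only [Fin.eta, Function.comp_apply]
        rw [heq]
      have := key b.1 hab b.isLt hteq
      simp only [Fin.eta] at this
      rw [Fin.lt_def]
      exact this

lemma sm_mono {N : ℕ} {e : Fin n → Fin N} (h : sm e) {a b : ℕ} (hab : a ≤ b) (hb : b < n) :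
    tval e a + (b - a) ≤ tval e b := by
  induction b, hab using Nat.le_induction with
  | base => simp
  | succ b hab ih =>
    have hb' : b < n := by omega
    have hbr : b ∈ range (n - 1) := by simp only [mem_range]; omega
    have := h b hbr
    have := ih hb'
    omega

lemma sm_iff_strictMono {N : ℕ} (e : Fin n → Fin N) : sm e ↔ StrictMono e := by
  constructor
  · intro h a b hab
    rw [Fin.lt_def] at hab ⊢
    have := sm_mono h (Nat.le_of_lt hab) b.isLt
    rw [tval_of_lt _ a.isLt, tval_of_lt _ b.isLt] at this
    simp only [Fin.eta] at this
    omega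
  · intro h i hi
    simp only [mem_range] at hi
    have hi1 : i + 1 < n := by omega
    have hi0 : i < n := by omega
    rw [tval_of_lt _ hi0, tval_of_lt _ hi1]
    have : (⟨i, hi0⟩ : Fin n) < ⟨i + 1, hi1⟩ := by simp [Fin.lt_def]
    have := h this
    rw [Fin.lt_def] at this
    exact this

lemma card_sm (N : ℕ) :
    ((univ : Finset (Fin n → Fin N)).filter (fun e => sm e)).card = N.choose n := by
  have hcard : ((univ : Finset (Fin N)).powersetCard n).card = N.choose n := by
    rw [card_powersetCard, card_univ, Fintype.card_fin]
  rw [← hcard]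
  apply Finset.card_bij' (fun e _ => Finset.image e univ)
    (fun s hs => fun i => s.orderEmbOfFin (by
      simp only [mem_powersetCard] at hs; exact hs.2) i)
  case hi =>
    intro e he
    simp only [mem_filter, mem_univ, true_and] at he
    have hsm := (sm_iff_strictMono e).mp he
    simp only [mem_powersetCard]
    refine ⟨subset_univ _, ?_⟩
    rw [Finset.card_image_of_injective _ hsm.injective, card_univ, Fintype.card_fin]
  case hj =>
    intro s hs
    simp only [mem_filter, mem_univ, true_and]
    apply (sm_iff_strictMono _).mpr
    exact (s.orderEmbOfFin _).strictMono
  case left_inv =>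
    intro e he
    simp only [mem_filter, mem_univ, true_and] at he
    have hsm := (sm_iff_strictMono e).mp he
    have hmem : ∀ x, e x ∈ Finset.image e univ := fun x => mem_image_of_mem e (mem_univ x)
    have hc : (Finset.image e univ).card = n := by
      rw [Finset.card_image_of_injective _ hsm.injective, card_univ, Fintype.card_fin]
    have := Finset.orderEmbOfFin_unique (f := e) hc hmem hsm
    exact this.symm
  case right_inv =>
    intro s hs
    simp only [mem_powersetCard] at hs
    apply Finset.eq_of_subset_of_card_le
    · intro x hx
      simp only [mem_image] at hx
      obtain ⟨i, _, rfl⟩ := hx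
      exact Finset.orderEmbOfFin_mem s hs.2 i
    · rw [Finset.card_image_of_injective _ (s.orderEmbOfFin hs.2).strictMono.injective,
        card_univ, Fintype.card_fin, hs.2]

lemma des_le (σ : Equiv.Perm (Fin n)) : des σ ≤ n - 1 := by
  rw [des_eq]
  calc ((range (n - 1)).filter (dsc σ)).card ≤ (range (n - 1)).card := card_filter_le _ _
    _ = n - 1 := card_range _

lemma card_chain {m : ℕ} (hm : 0 < m) (σ : Equiv.Perm (Fin n)) :
    ((univ : Finset (Fin n → Fin m)).filter (fun v => chain σ v)).card
      = (m + n - des σ - 1).choose n := by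
  rcases Nat.lt_or_ge (des σ) m with hcase | hcase
  · -- main case : des σ < m
    rw [← card_sm (n := n) (m + n - des σ - 1)]
    have hdes : des σ ≤ n - 1 := des_le σ
    apply Finset.card_bij'
      (fun v _ => fun x : Fin n => (⟨tval v x.1 + x.1 - D σ x.1, by
        have h1 : tval v x.1 < m := tval_lt v x.isLt
        have h2 : D σ x.1 ≤ x.1 := D_le_self σ x.1
        have h3 : x.1 ≤ n - 1 := by have := x.isLt; omega
        have h4 : des σ ≤ D σ x.1 + (n - 1 - x.1) := by
          have := D_le_add σ (a := x.1) (b := n - 1) h3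
          rw [D_eq_des σ (le_refl _)] at this
          omega
        omega⟩ : Fin (m + n - des σ - 1)))
      (fun e he => fun x : Fin n => (⟨tval e x.1 + D σ x.1 - x.1, by
        have hsm : sm e := (mem_filter.mp he).2
        have hn1 : n - 1 < n := by have := x.isLt; omega
        have h1 : tval e x.1 + (n - 1 - x.1) ≤ tval e (n - 1) := by
          have := sm_mono (e := e) hsm (show x.1 ≤ n - 1 by have := x.isLt; omega) hn1
          omega
        have h2 : tval e (n - 1) < m + n - des σ - 1 := tval_lt e hn1
        have h3 : D σ x.1 ≤ des σ := by
          rw [← D_eq_des σ (le_refl (n-1))]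
          exact D_mono σ (by have := x.isLt; omega)
        have h4 : x.1 ≤ n - 1 := by have := x.isLt; omega
        omega⟩ : Fin m))
    case hi =>
      intro v hv
      simp only [mem_filter, mem_univ, true_and] at hv ⊢
      intro i hi
      simp only [mem_range] at hi
      have hi0 : i < n := by omega
      have hi1 : i + 1 < n := by omega
      rw [tval_of_lt _ hi0, tval_of_lt _ hi1]
      simp only
      have hc := hv i (by simp only [mem_range]; omega)
      have hD1 : D σ i ≤ i := D_le_self σ i
      by_cases hd : dsc σ i
      · have := D_succ_of σ (by omega) hd
        have := hc.2 hd
        omega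
      · have := D_succ_not σ hd
        have := hc.1
        omega
    case hj =>
      intro e he
      simp only [mem_filter, mem_univ, true_and] at he ⊢
      intro i hi
      simp only [mem_range] at hi
      have hi0 : i < n := by omega
      have hi1 : i + 1 < n := by omega
      rw [tval_of_lt _ hi0, tval_of_lt _ hi1]
      simp only
      have hse := he i (by simp only [mem_range]; omega)
      have hlb : i ≤ tval e i := by
        have := sm_mono (e := e) he (show 0 ≤ i by omega) hi0
        omega
      have hD1 : D σ i ≤ i := D_le_self σ i
      by_cases hd : dsc σ i
      · have := D_succ_of σ (by omega) hd
        constructor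
        · omega
        · intro _; omega
      · have := D_succ_not σ hd
        constructor
        · omega
        · intro hdd; exact absurd hdd hd
    case left_inv =>
      intro v hv
      simp only [mem_filter, mem_univ, true_and] at hv
      funext x
      apply Fin.ext
      simp only
      rw [tval_of_lt _ x.isLt]
      simp only [Fin.eta]
      rw [tval_of_lt _ x.isLt]
      simp only [Fin.eta]
      have h2 : D σ x.1 ≤ x.1 := D_le_self σ x.1
      omega
    case right_inv =>
      intro e he
      simp only [mem_filter, mem_univ, true_and] at he
      funext x
      apply Fin.ext
      simp only
      rw [tval_of_lt _ x.isLt]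
      simp only [Fin.eta]
      rw [tval_of_lt _ x.isLt]
      simp only [Fin.eta]
      have hlb : x.1 ≤ tval e x.1 := by
        have := sm_mono (e := e) he (show 0 ≤ x.1 by omega) x.isLt
        omega
      rw [tval_of_lt _ x.isLt] at hlb
      simp only [Fin.eta] at hlb
      omega
  · -- degenerate case : m ≤ des σ, both sides are zero
    have hm2 : 1 ≤ des σ := le_trans hm hcase
    have hn2 : 2 ≤ n := by
      by_contra hn
      have : n - 1 = 0 := by omega
      have := des_le σ
      omega
    rw [Nat.choose_eq_zero_of_lt (by have := des_le σ; omega)]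
    rw [Finset.card_eq_zero, Finset.filter_eq_empty_iff]
    intro v _
    intro hchain
    have h1 : D σ (n - 1) ≤ tval v (n - 1) := chain_lb hchain (by omega)
    rw [D_eq_des σ (le_refl _)] at h1
    have h2 : tval v (n - 1) < m := tval_lt v (by omega)
    omega

lemma card_sort {m : ℕ} (hm : 0 < m) (σ : Equiv.Perm (Fin n)) :
    ((univ : Finset (Fin n → Fin m)).filter (fun g => Tuple.sort g = σ)).card
      = (m + n - des σ - 1).choose n := by
  rw [← card_chain hm σ]
  apply Finset.card_bij' (fun g _ => g ∘ σ) (fun v _ => v ∘ ⇑σ⁻¹)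
  case hi =>
    intro g hg
    simp only [mem_filter, mem_univ, true_and] at hg ⊢
    exact (sort_eq_iff_chain σ g).mp hg
  case hj =>
    intro v hv
    simp only [mem_filter, mem_univ, true_and] at hv ⊢
    rw [sort_eq_iff_chain σ]
    have : (v ∘ ⇑σ⁻¹) ∘ ⇑σ = v := by
      funext x
      simp [Equiv.symm_apply_apply]
    rw [this]
    exact hv
  case left_inv =>
    intro g _
    funext x
    simp [Equiv.apply_symm_apply]
  case right_inv =>
    intro v _
    funext x
    simp [Equiv.symm_apply_apply]

lemma lt_key_aux {k a a' b b' : ℕ} (ha : a < k) (hb : b < b') : b * k + a < b' * k + a' := by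
  calc b * k + a < b * k + k := Nat.add_lt_add_left ha _
    _ = (b + 1) * k := by ring
    _ ≤ b' * k := Nat.mul_le_mul_right k hb
    _ ≤ b' * k + a' := Nat.le_add_right _ _

lemma lt_key {k a a' b b' : ℕ} (ha : a < k) (ha' : a' < k) :
    b * k + a < b' * k + a' ↔ b < b' ∨ (b = b' ∧ a < a') := by
  constructor
  · intro hlt
    rcases Nat.lt_trichotomy b b' with h | h | h
    · exact Or.inl h
    · subst h
      refine Or.inr ⟨rfl, ?_⟩
      omega
    · exfalso
      have hgt : b' * k + a' < b * k + a := lt_key_aux ha' h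
      omega
  · rintro (h | ⟨rfl, h⟩)
    · exact lt_key_aux ha h
    · omega

lemma eq_key {k a a' b b' : ℕ} (ha : a < k) (ha' : a' < k) :
    b * k + a = b' * k + a' ↔ b = b' ∧ a = a' := by
  constructor
  · intro heq
    rcases Nat.lt_trichotomy b b' with h | h | h
    · exfalso
      have hgt : b * k + a < b' * k + a' := lt_key_aux ha h
      omega
    · subst h
      refine ⟨rfl, ?_⟩
      omega
    · exfalso
      have hgt : b' * k + a' < b * k + a := lt_key_aux ha' h
      omega
  · rintro ⟨rfl, rfl⟩; rfl

def enc {n k l : ℕ} (A : Fin n → Fin k) (B : Fin n → Fin l) : Fin n → Fin (k * l) :=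
  fun x => ⟨(B x : ℕ) * k + (A x : ℕ), by
    calc (B x : ℕ) * k + (A x : ℕ) < (B x : ℕ) * k + k := by
          exact Nat.add_lt_add_left (A x).isLt _
      _ = ((B x : ℕ) + 1) * k := by ring
      _ ≤ l * k := Nat.mul_le_mul_right k (B x).isLt
      _ = k * l := Nat.mul_comm l k⟩

lemma enc_lt_iff {k l : ℕ} {A : Fin n → Fin k} {B : Fin n → Fin l} {x y : Fin n} :
    enc A B x < enc A B y ↔ (B x < B y ∨ (B x = B y ∧ A x < A y)) := by
  simp only [enc, Fin.lt_def, Fin.ext_iff]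
  exact lt_key (A x).isLt (A y).isLt

lemma enc_eq_iff' {k l : ℕ} {A : Fin n → Fin k} {B : Fin n → Fin l} {x y : Fin n} :
    enc A B x = enc A B y ↔ (B x = B y ∧ A x = A y) := by
  simp only [enc, Fin.ext_iff]
  exact eq_key (A x).isLt (A y).isLt

lemma enc_le_iff {k l : ℕ} {A : Fin n → Fin k} {B : Fin n → Fin l} {x y : Fin n} :
    enc A B x ≤ enc A B y ↔ (B x < B y ∨ (B x = B y ∧ A x ≤ A y)) := by
  rw [le_iff_lt_or_eq, enc_lt_iff, enc_eq_iff']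
  constructor
  · rintro ((h | ⟨h1, h2⟩) | ⟨h1, h2⟩)
    · exact Or.inl h
    · exact Or.inr ⟨h1, le_of_lt h2⟩
    · exact Or.inr ⟨h1, le_of_eq h2⟩
  · rintro (h | ⟨h1, h2⟩)
    · exact Or.inl (Or.inl h)
    · rcases lt_or_eq_of_le h2 with h' | h'
      · exact Or.inl (Or.inr ⟨h1, h'⟩)
      · exact Or.inr ⟨h1, h'⟩

lemma dagger {k l : ℕ} (A : Fin n → Fin k) (B : Fin n → Fin l) :
    Tuple.sort (enc A B) = Tuple.sort A * Tuple.sort (B ∘ (Tuple.sort A)) := by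
  have hA := (Tuple.eq_sort_iff (f := A) (σ := Tuple.sort A)).mp rfl
  have hB := (Tuple.eq_sort_iff (f := B ∘ (Tuple.sort A))
    (σ := Tuple.sort (B ∘ (Tuple.sort A)))).mp rfl
  set σA := Tuple.sort A with hσA
  set τ := Tuple.sort (B ∘ σA) with hτ
  refine ((Tuple.eq_sort_iff).mpr ⟨?_, ?_⟩).symm
  · apply monotone_iff_forall_lt.mpr
    intro i j hij
    simp only [Function.comp_apply, Equiv.Perm.coe_mul]
    have hBle : B (σA (τ i)) ≤ B (σA (τ j)) := by
      have := hB.1 (le_of_lt hij)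
      simpa only [Function.comp_apply] using this
    rcases lt_or_eq_of_le hBle with h | h
    · exact enc_le_iff.mpr (Or.inl h)
    · have hτij : τ i < τ j := hB.2 i j hij (by
        simpa only [Function.comp_apply] using h)
      have hAle : A (σA (τ i)) ≤ A (σA (τ j)) := hA.1 (le_of_lt hτij)
      exact enc_le_iff.mpr (Or.inr ⟨h, hAle⟩)
  · intro i j hij heq
    simp only [Function.comp_apply, Equiv.Perm.coe_mul] at heq ⊢
    obtain ⟨hBeq, hAeq⟩ := enc_eq_iff'.mp heq
    have hτij : τ i < τ j := hB.2 i j hij (by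
      simpa only [Function.comp_apply] using hBeq)
    exact hA.2 (τ i) (τ j) hτij hAeq

def dec1 {n k l : ℕ} (hk : 0 < k) (F : Fin n → Fin (k * l)) : Fin n → Fin k :=
  fun x => ⟨(F x : ℕ) % k, Nat.mod_lt _ hk⟩

def dec2 {n k l : ℕ} (hk : 0 < k) (F : Fin n → Fin (k * l)) : Fin n → Fin l :=
  fun x => ⟨(F x : ℕ) / k, by
    rw [Nat.div_lt_iff_lt_mul hk, Nat.mul_comm l k]
    exact (F x).isLt⟩

lemma dec1_enc {k l : ℕ} (hk : 0 < k) (A : Fin n → Fin k) (B : Fin n → Fin l) :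
    dec1 hk (enc A B) = A := by
  funext x
  apply Fin.ext
  simp only [dec1, enc]
  rw [Nat.mul_comm ((B x : ℕ)) k, Nat.mul_add_mod]
  exact Nat.mod_eq_of_lt (A x).isLt

lemma dec2_enc {k l : ℕ} (hk : 0 < k) (A : Fin n → Fin k) (B : Fin n → Fin l) :
    dec2 hk (enc A B) = B := by
  funext x
  apply Fin.ext
  simp only [dec2, enc]
  rw [Nat.mul_comm ((B x : ℕ)) k, Nat.mul_add_div hk, Nat.div_eq_of_lt (A x).isLt]
  omega

lemma enc_dec {k l : ℕ} (hk : 0 < k) (F : Fin n → Fin (k * l)) :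
    enc (dec1 hk F) (dec2 hk F) = F := by
  funext x
  apply Fin.ext
  simp only [enc, dec1, dec2]
  rw [Nat.mul_comm]
  exact Nat.div_add_mod _ k

end StmtAux

theorem stmt0 (n k l : ℕ) (hk : 0 < k) (hl : 0 < l) (π : Equiv.Perm (Fin n)) :
    Nat.choose (k * l + n - des π - 1) n =
      ∑ σ : Equiv.Perm (Fin n),
        Nat.choose (k + n - des σ - 1) n * Nat.choose (l + n - des (σ⁻¹ * π) - 1) n := by
  have hkl : 0 < k * l := Nat.mul_pos hk hl
  rw [← StmtAux.card_sort hkl π]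
  have hterm : ∀ σ : Equiv.Perm (Fin n),
      Nat.choose (k + n - des σ - 1) n * Nat.choose (l + n - des (σ⁻¹ * π) - 1) n
      = ((univ.filter (fun g : Fin n → Fin k => Tuple.sort g = σ)).card)
        * ((univ.filter (fun h : Fin n → Fin l => Tuple.sort h = σ⁻¹ * π)).card) := by
    intro σ
    rw [StmtAux.card_sort hk σ, StmtAux.card_sort hl (σ⁻¹ * π)]
  rw [Finset.sum_congr rfl (fun σ _ => hterm σ)]
  have h12 : ((univ : Finset (Fin n → Fin (k * l))).filter
        (fun F => Tuple.sort F = π)).card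
      = ((univ : Finset ((Fin n → Fin k) × (Fin n → Fin l))).filter
        (fun p => Tuple.sort p.1 * Tuple.sort p.2 = π)).card := by
    apply Finset.card_bij'
      (fun F _ => (StmtAux.dec1 hk F, StmtAux.dec2 hk F ∘ ⇑(Tuple.sort (StmtAux.dec1 hk F))))
      (fun p _ => StmtAux.enc p.1 (p.2 ∘ ⇑(Tuple.sort p.1)⁻¹))
    case hi =>
      intro F hF
      simp only [mem_filter, mem_univ, true_and] at hF ⊢
      have hd := StmtAux.dagger (StmtAux.dec1 hk F) (StmtAux.dec2 hk F)
      rw [StmtAux.enc_dec hk F] at hd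
      rw [← hd]
      exact hF
    case hj =>
      intro p hp
      simp only [mem_filter, mem_univ, true_and] at hp ⊢
      have hd := StmtAux.dagger p.1 (p.2 ∘ ⇑(Tuple.sort p.1)⁻¹)
      have hcomp : (p.2 ∘ ⇑(Tuple.sort p.1)⁻¹) ∘ ⇑(Tuple.sort p.1) = p.2 := by
        funext x
        simp [Equiv.symm_apply_apply]
      rw [hcomp] at hd
      rw [hd]
      exact hp
    case left_inv =>
      intro F hF
      have h1 := StmtAux.dec1_enc hk (StmtAux.dec1 hk F)
        (StmtAux.dec2 hk F ∘ ⇑(Tuple.sort (StmtAux.dec1 hk F)))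
      simp only
      have hcomp : ((StmtAux.dec2 hk F ∘ ⇑(Tuple.sort (StmtAux.dec1 hk F)))
          ∘ ⇑(Tuple.sort (StmtAux.dec1 hk F))⁻¹) = StmtAux.dec2 hk F := by
        funext x
        simp [Equiv.apply_symm_apply]
      rw [hcomp]
      exact StmtAux.enc_dec hk F
    case right_inv =>
      intro p hp
      obtain ⟨A, B⟩ := p
      simp only
      have h1 : StmtAux.dec1 hk (StmtAux.enc A (B ∘ ⇑(Tuple.sort A)⁻¹)) = A :=
        StmtAux.dec1_enc hk A _
      have h2 : StmtAux.dec2 hk (StmtAux.enc A (B ∘ ⇑(Tuple.sort A)⁻¹))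
          = B ∘ ⇑(Tuple.sort A)⁻¹ := StmtAux.dec2_enc hk A _
      rw [Prod.mk.injEq]
      refine ⟨h1, ?_⟩
      rw [h2, h1]
      funext x
      simp [Equiv.symm_apply_apply]
  rw [h12]
  rw [Finset.card_eq_sum_card_fiberwise
    (f := fun p : (Fin n → Fin k) × (Fin n → Fin l) => Tuple.sort p.1)
    (t := univ) (fun x _ => mem_univ _)]
  apply Finset.sum_congr rfl
  intro σ _
  rw [Finset.filter_filter]
  have hiff : ∀ p ∈ (univ : Finset ((Fin n → Fin k) × (Fin n → Fin l))),
      ((Tuple.sort p.1 * Tuple.sort p.2 = π) ∧ Tuple.sort p.1 = σ) ↔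
      (Tuple.sort p.1 = σ ∧ Tuple.sort p.2 = σ⁻¹ * π) := by
    intro p _
    constructor
    · rintro ⟨h1, h2⟩
      refine ⟨h2, ?_⟩
      rw [← h1, ← h2, inv_mul_cancel_left]
    · rintro ⟨h1, h2⟩
      refine ⟨?_, h1⟩
      rw [h1, h2, mul_inv_cancel_left]
  rw [Finset.filter_congr hiff]
  have hfp := Finset.filter_product (s := (univ : Finset (Fin n → Fin k)))
    (t := (univ : Finset (Fin n → Fin l)))
    (fun g => Tuple.sort g = σ) (fun h => Tuple.sort h = σ⁻¹ * π)
  rw [Finset.univ_product_univ] at hfp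
  rw [hfp, Finset.card_product]
end

section
/- The numbers l(n,k) of permutations of {1,...,n} with exactly k left peaks satisfy the recurrence l(n,k) = (2k+1)·l(n-1,k) + (n+1-2k)·l(n-1,k-1) for n ≥ 2 and k ≥ 1, with l(n,0) = 1 for all n ≥ 1. -/
/-- `lcount n k` is the number of permutations of `{1,…,n}` with exactly `k` left peaks. -/
def lcount (n k : ℕ) : ℕ :=
  (Finset.univ.filter (fun π : Equiv.Perm (Fin n) => lpk π = k)).card


open Finset

def ins {m : ℕ} (σ : Equiv.Perm (Fin m)) (p : Fin (m+1)) : Equiv.Perm (Fin (m+1)) :=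
  (finSuccEquiv' p).trans ((Equiv.optionCongr σ).trans (finSuccEquiv' (Fin.last m)).symm)

lemma ins_self {m : ℕ} (σ : Equiv.Perm (Fin m)) (p : Fin (m+1)) : ins σ p p = Fin.last m := by
  simp [ins]

lemma ins_succAbove {m : ℕ} (σ : Equiv.Perm (Fin m)) (p : Fin (m+1)) (j : Fin m) :
    ins σ p (p.succAbove j) = (σ j).castSucc := by
  simp [ins, finSuccEquiv'_succAbove, finSuccEquiv'_symm_some]

lemma pval_le {n : ℕ} (π : Equiv.Perm (Fin n)) (j : ℕ) : pval π j ≤ n := by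
  unfold pval; split
  · have := (π ⟨j-1, by omega⟩).isLt; omega
  · omega

lemma pval_zero {n : ℕ} (π : Equiv.Perm (Fin n)) : pval π 0 = 0 := by
  unfold pval; rw [dif_neg (by omega)]

lemma pval_ins_self {m : ℕ} (σ : Equiv.Perm (Fin m)) (p : Fin (m+1)) :
    pval (ins σ p) (p.val + 1) = m + 1 := by
  unfold pval
  rw [dif_pos ⟨by omega, by omega⟩]
  have : (⟨p.val + 1 - 1, by omega⟩ : Fin (m+1)) = p := by ext; simp
  rw [this, ins_self]
  simp [Fin.last]

lemma pval_ins_lt {m : ℕ} (σ : Equiv.Perm (Fin m)) (p : Fin (m+1)) (j : ℕ)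
    (h1 : 1 ≤ j) (h2 : j ≤ p.val) : pval (ins σ p) j = pval σ j := by
  have hp : p.val ≤ m := by omega
  have hjm : j ≤ m := by omega
  unfold pval
  rw [dif_pos ⟨h1, by omega⟩, dif_pos ⟨h1, hjm⟩]
  have key : (⟨j - 1, by omega⟩ : Fin (m+1)) = p.succAbove ⟨j-1, by omega⟩ := by
    rw [Fin.succAbove_of_castSucc_lt]
    · rfl
    · simp [Fin.lt_def]; omega
  rw [key, ins_succAbove]
  simp

lemma pval_ins_le {m : ℕ} (σ : Equiv.Perm (Fin m)) (p : Fin (m+1)) (j : ℕ)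
    (h2 : j ≤ p.val) : pval (ins σ p) j = pval σ j := by
  rcases Nat.eq_zero_or_pos j with h | h
  · rw [h, pval_zero, pval_zero]
  · exact pval_ins_lt σ p j h h2

lemma pval_ins_gt {m : ℕ} (σ : Equiv.Perm (Fin m)) (p : Fin (m+1)) (j : ℕ)
    (h1 : p.val + 2 ≤ j) (h2 : j ≤ m + 1) : pval (ins σ p) j = pval σ (j - 1) := by
  unfold pval
  rw [dif_pos ⟨by omega, h2⟩, dif_pos ⟨by omega, by omega⟩]
  have key : (⟨j - 1, by omega⟩ : Fin (m+1)) = p.succAbove ⟨j-2, by omega⟩ := by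
    rw [Fin.succAbove_of_le_castSucc]
    · ext; simp; omega
    · simp [Fin.le_def]; omega
  rw [key, ins_succAbove]
  simp
  congr 1

lemma pval_ins_ne {m : ℕ} (σ : Equiv.Perm (Fin m)) (p : Fin (m+1)) (j : ℕ)
    (h : j ≠ p.val + 1) : pval (ins σ p) j ≤ m := by
  rcases Nat.lt_or_ge j (p.val + 1) with h1 | h1
  · rw [pval_ins_le σ p j (by omega)]; exact pval_le σ j
  · rcases Nat.lt_or_ge (m+1) j with h2 | h2
    · unfold pval; rw [dif_neg (by omega)]; omega
    · rw [pval_ins_gt σ p j (by omega) h2]; exact pval_le σ _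

def peaksF {n : ℕ} (π : Equiv.Perm (Fin n)) : Finset ℕ :=
  (Finset.Icc 1 (n - 1)).filter
    (fun i => pval π (i - 1) < pval π i ∧ pval π (i + 1) < pval π i)

lemma lpk_eq {n : ℕ} (π : Equiv.Perm (Fin n)) : lpk π = (peaksF π).card := rfl

lemma mem_peaksF {n : ℕ} {π : Equiv.Perm (Fin n)} {j : ℕ} :
    j ∈ peaksF π ↔ (1 ≤ j ∧ j ≤ n - 1) ∧ pval π (j-1) < pval π j ∧ pval π (j+1) < pval π j := by
  simp [peaksF, Finset.mem_filter, Finset.mem_Icc, and_assoc]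

lemma not_adj {n : ℕ} {π : Equiv.Perm (Fin n)} {j : ℕ} (hj : j ∈ peaksF π) :
    j + 1 ∉ peaksF π := by
  rw [mem_peaksF] at hj
  rw [mem_peaksF]
  rintro ⟨_, h1, _⟩
  rw [Nat.add_sub_cancel] at h1
  omega

lemma lpk_ins {m : ℕ} (σ : Equiv.Perm (Fin m)) (p : Fin (m+1)) :
    lpk (ins σ p) =
      if p.val = m ∨ p.val ∈ peaksF σ ∨ p.val + 1 ∈ peaksF σ then lpk σ else lpk σ + 1 := by
  by_cases hm : p.val = m
  · rw [if_pos (Or.inl hm), lpk_eq, lpk_eq]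
    congr 1
    ext i
    rw [mem_peaksF, mem_peaksF]
    simp only [Nat.add_sub_cancel]
    constructor
    · rintro ⟨⟨h1, h2⟩, hc1, hc2⟩
      have hi : i ≤ m - 1 := by
        by_contra hcon
        have hie : i = m := by omega
        rw [hie] at hc2
        have he := pval_ins_self σ p
        rw [hm] at he
        have hle := pval_le (ins σ p) m
        omega
      refine ⟨⟨h1, hi⟩, ?_, ?_⟩
      · rwa [pval_ins_le σ p (i-1) (by omega), pval_ins_le σ p i (by omega)] at hc1
      · rwa [pval_ins_le σ p (i+1) (by omega), pval_ins_le σ p i (by omega)] at hc2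
    · rintro ⟨⟨h1, h2⟩, hc1, hc2⟩
      have h2m : 1 ≤ m := by omega
      refine ⟨⟨h1, by omega⟩, ?_, ?_⟩
      · rwa [pval_ins_le σ p (i-1) (by omega), pval_ins_le σ p i (by omega)]
      · rwa [pval_ins_le σ p (i+1) (by omega), pval_ins_le σ p i (by omega)]
  · have hpm : p.val < m := lt_of_le_of_ne (by omega) hm
    set g : ℕ → ℕ := fun j => if j ≤ p.val then j else j + 1 with hg
    have hginj : Function.Injective g := by
      intro a b hab
      simp only [hg] at hab
      split_ifs at hab <;> omega
    have hQ : peaksF (ins σ p) =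
        insert (p.val+1) ((peaksF σ).filter (fun j => j ≠ p.val ∧ j ≠ p.val+1) |>.image g) := by
      ext i
      rw [Finset.mem_insert, Finset.mem_image, mem_peaksF]
      simp only [Nat.add_sub_cancel]
      constructor
      · rintro ⟨⟨h1, h2⟩, hc1, hc2⟩
        by_cases hip : i = p.val + 1
        · exact Or.inl hip
        right
        have hnp : i ≠ p.val := by
          rintro rfl
          rw [pval_ins_self] at hc2
          have := pval_ins_ne σ p p.val (by omega)
          omega
        have hnp2 : i ≠ p.val + 2 := by
          rintro rfl
          rw [show p.val + 2 - 1 = p.val + 1 by omega, pval_ins_self] at hc1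
          have := pval_ins_ne σ p (p.val + 2) (by omega)
          omega
        rcases Nat.lt_or_ge i (p.val + 1) with hlt | hge
        · have hi' : i < p.val := by omega
          refine ⟨i, Finset.mem_filter.mpr ⟨?_, by omega, by omega⟩, by simp [hg, le_of_lt hi']⟩
          rw [mem_peaksF]
          refine ⟨⟨h1, by omega⟩, ?_, ?_⟩
          · rwa [pval_ins_le σ p (i-1) (by omega), pval_ins_le σ p i (by omega)] at hc1
          · rwa [pval_ins_le σ p (i+1) (by omega), pval_ins_le σ p i (by omega)] at hc2
        · have hi3 : p.val + 3 ≤ i := by omega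
          refine ⟨i - 1, Finset.mem_filter.mpr ⟨?_, by omega, by omega⟩, ?_⟩
          · rw [mem_peaksF]
            rw [pval_ins_gt σ p (i-1) (by omega) (by omega),
                pval_ins_gt σ p i (by omega) (by omega)] at hc1
            rw [pval_ins_gt σ p i (by omega) (by omega),
                pval_ins_gt σ p (i+1) (by omega) (by omega)] at hc2
            refine ⟨⟨by omega, by omega⟩, ?_, ?_⟩
            · exact hc1
            · rw [show i - 1 + 1 = i + 1 - 1 by omega]
              exact hc2
          · simp only [hg]
            rw [if_neg (by omega)]
            omega
      · rintro (rfl | ⟨j, hjmem, hgj⟩)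
        · refine ⟨⟨by omega, by omega⟩, ?_, ?_⟩
          · rw [Nat.add_sub_cancel, pval_ins_self]
            have := pval_ins_ne σ p p.val (by omega)
            omega
          · rw [pval_ins_self]
            have := pval_ins_ne σ p (p.val + 1 + 1) (by omega)
            omega
        · rw [Finset.mem_filter] at hjmem
          obtain ⟨hjpk, hjp, hjp1⟩ := hjmem
          rw [mem_peaksF] at hjpk
          obtain ⟨⟨hj1, hj2⟩, hjc1, hjc2⟩ := hjpk
          simp only [hg] at hgj
          split_ifs at hgj with hcase
          · subst hgj
            have hjlt : j < p.val := by omega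
            refine ⟨⟨hj1, by omega⟩, ?_, ?_⟩
            · rwa [pval_ins_le σ p (j-1) (by omega), pval_ins_le σ p j (by omega)]
            · rwa [pval_ins_le σ p (j+1) (by omega), pval_ins_le σ p j (by omega)]
          · subst hgj
            have hjge : p.val + 2 ≤ j := by omega
            refine ⟨⟨by omega, by omega⟩, ?_, ?_⟩
            · rw [Nat.add_sub_cancel, pval_ins_gt σ p j (by omega) (by omega),
                pval_ins_gt σ p (j+1) (by omega) (by omega)]
              rw [Nat.add_sub_cancel]
              exact hjc1
            · rw [pval_ins_gt σ p (j+1+1) (by omega) (by omega),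
                pval_ins_gt σ p (j+1) (by omega) (by omega)]
              rw [show j + 1 + 1 - 1 = j + 1 by omega, show j + 1 - 1 = j by omega]
              exact hjc2
    have hnotmem : p.val + 1 ∉ ((peaksF σ).filter (fun j => j ≠ p.val ∧ j ≠ p.val+1)).image g := by
      rw [Finset.mem_image]
      rintro ⟨j, hj, hgj⟩
      rw [Finset.mem_filter] at hj
      simp only [hg] at hgj
      split_ifs at hgj <;> omega
    have hcard : lpk (ins σ p) =
        1 + ((peaksF σ).filter (fun j => j ≠ p.val ∧ j ≠ p.val+1)).card := by
      rw [lpk_eq, hQ, Finset.card_insert_of_notMem hnotmem,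
        Finset.card_image_of_injective _ hginj]
      omega
    by_cases hp : p.val ∈ peaksF σ
    · have hp1 : p.val + 1 ∉ peaksF σ := not_adj hp
      have hfe : (peaksF σ).filter (fun j => j ≠ p.val ∧ j ≠ p.val+1) = (peaksF σ).erase p.val := by
        ext j
        rw [Finset.mem_filter, Finset.mem_erase]
        constructor
        · rintro ⟨h1, h2, _⟩; exact ⟨h2, h1⟩
        · rintro ⟨h2, h1⟩
          refine ⟨h1, h2, ?_⟩
          rintro rfl; exact hp1 h1
      rw [if_pos (Or.inr (Or.inl hp)), hcard, hfe, Finset.card_erase_of_mem hp, lpk_eq]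
      have : 0 < (peaksF σ).card := Finset.card_pos.mpr ⟨_, hp⟩
      omega
    · by_cases hp1 : p.val + 1 ∈ peaksF σ
      · have hfe : (peaksF σ).filter (fun j => j ≠ p.val ∧ j ≠ p.val+1)
            = (peaksF σ).erase (p.val+1) := by
          ext j
          rw [Finset.mem_filter, Finset.mem_erase]
          constructor
          · rintro ⟨h1, _, h3⟩; exact ⟨h3, h1⟩
          · rintro ⟨h3, h1⟩
            refine ⟨h1, ?_, h3⟩
            rintro rfl; exact hp h1
        rw [if_pos (Or.inr (Or.inr hp1)), hcard, hfe, Finset.card_erase_of_mem hp1, lpk_eq]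
        have : 0 < (peaksF σ).card := Finset.card_pos.mpr ⟨_, hp1⟩
        omega
      · have hfe : (peaksF σ).filter (fun j => j ≠ p.val ∧ j ≠ p.val+1) = peaksF σ := by
          apply Finset.filter_true_of_mem
          intro j hj
          constructor
          · rintro rfl; exact hp hj
          · rintro rfl; exact hp1 hj
        rw [if_neg (by tauto), hcard, hfe, lpk_eq]
        omega
lemma mem_peaksF_bounds {n : ℕ} {π : Equiv.Perm (Fin n)} {j : ℕ} (h : j ∈ peaksF π) :
    1 ≤ j ∧ j ≤ n - 1 := (mem_peaksF.mp h).1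

def pres {m : ℕ} (σ : Equiv.Perm (Fin m)) (p : Fin (m+1)) : Prop :=
  p.val = m ∨ p.val ∈ peaksF σ ∨ p.val + 1 ∈ peaksF σ

instance {m : ℕ} (σ : Equiv.Perm (Fin m)) (p : Fin (m+1)) : Decidable (pres σ p) := by
  unfold pres; infer_instance

lemma card_pres {m : ℕ} (hm : 1 ≤ m) (σ : Equiv.Perm (Fin m)) :
    (Finset.univ.filter (fun p : Fin (m+1) => pres σ p)).card = 2 * lpk σ + 1 := by
  set P := peaksF σ with hP
  have hcard : (Finset.univ.filter (fun p : Fin (m+1) => pres σ p)).card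
      = (insert m (P ∪ P.image (fun j => j - 1))).card := by
    apply Finset.card_nbij (fun p => p.val)
    · intro p hp
      rw [Finset.mem_coe, Finset.mem_filter] at hp
      rcases hp.2 with h | h | h
      · exact Finset.mem_insert.mpr (Or.inl h)
      · exact Finset.mem_insert.mpr (Or.inr (Finset.mem_union_left _ h))
      · refine Finset.mem_insert.mpr (Or.inr (Finset.mem_union_right _ ?_))
        exact Finset.mem_image.mpr ⟨p.val + 1, h, by simp⟩
    · intro a _ b _ hab
      exact Fin.ext hab
    · intro j hj
      simp only [Finset.coe_insert, Set.mem_insert_iff, Finset.coe_union, Set.mem_union,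
        Finset.coe_image, Set.mem_image, Finset.mem_coe] at hj
      rcases hj with hje | hj | ⟨i, hi, hie⟩
      · refine ⟨⟨m, by omega⟩, ?_, hje.symm⟩
        simp only [Finset.coe_filter, Set.mem_setOf_eq, Finset.mem_univ, true_and]
        exact Or.inl rfl
      · have hb := mem_peaksF_bounds hj
        refine ⟨⟨j, by omega⟩, ?_, rfl⟩
        simp only [Finset.coe_filter, Set.mem_setOf_eq, Finset.mem_univ, true_and]
        exact Or.inr (Or.inl hj)
      · have hb := mem_peaksF_bounds hi
        refine ⟨⟨i - 1, by omega⟩, ?_, hie⟩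
        simp only [Finset.coe_filter, Set.mem_setOf_eq, Finset.mem_univ, true_and]
        right; right
        rwa [show i - 1 + 1 = i by omega]
  have hmnot : m ∉ P ∪ P.image (fun j => j - 1) := by
    rw [Finset.mem_union]
    rintro (h | h)
    · have := mem_peaksF_bounds h; omega
    · rw [Finset.mem_image] at h
      obtain ⟨i, hi, hie⟩ := h
      have := mem_peaksF_bounds hi; omega
  have hdisj : Disjoint P (P.image (fun j => j - 1)) := by
    rw [Finset.disjoint_left]
    intro j hj hj'
    rw [Finset.mem_image] at hj'
    obtain ⟨i, hi, hie⟩ := hj'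
    have hb := mem_peaksF_bounds hi
    have : i = j + 1 := by omega
    subst this
    exact not_adj hj hi
  have himg : (P.image (fun j => j - 1)).card = P.card := by
    apply Finset.card_image_of_injOn
    intro a ha b hb hab
    simp only at hab
    have := mem_peaksF_bounds ha
    have := mem_peaksF_bounds hb
    omega
  rw [hcard, Finset.card_insert_of_notMem hmnot, Finset.card_union_of_disjoint hdisj, himg,
    lpk_eq, ← hP]
  omega

lemma ins_bijective {m : ℕ} :
    Function.Bijective (fun x : Equiv.Perm (Fin m) × Fin (m+1) => ins x.1 x.2) := by
  rw [Fintype.bijective_iff_injective_and_card]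
  constructor
  · rintro ⟨σ, p⟩ ⟨σ', p'⟩ h
    simp only at h
    have e1 : (ins σ p).symm (Fin.last m) = p := by
      rw [Equiv.symm_apply_eq]; exact (ins_self σ p).symm
    have e2 : (ins σ' p').symm (Fin.last m) = p' := by
      rw [Equiv.symm_apply_eq]; exact (ins_self σ' p').symm
    have hpp : p = p' := by rw [← e1, ← e2, h]
    subst hpp
    have hσ : σ = σ' := by
      apply Equiv.ext
      intro j
      have h1 : ins σ p (p.succAbove j) = ins σ' p (p.succAbove j) := by rw [h]
      rw [ins_succAbove, ins_succAbove] at h1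
      exact Fin.castSucc_injective _ h1
    rw [hσ]
  · simp [Fintype.card_perm, Nat.factorial_succ, mul_comm]

lemma main_rec {m k : ℕ} (hm : 1 ≤ m) (hk : 1 ≤ k) :
    lcount (m+1) k = (2*k+1) * lcount m k + (m - 2*(k-1)) * lcount m (k-1) := by
  classical
  set E : Equiv.Perm (Fin m) × Fin (m+1) ≃ Equiv.Perm (Fin (m+1)) :=
    Equiv.ofBijective _ (ins_bijective (m := m)) with hE
  have step1 : lcount (m+1) k =
      (Finset.univ.filter
        (fun x : Equiv.Perm (Fin m) × Fin (m+1) => lpk (ins x.1 x.2) = k)).card := by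
    unfold lcount
    refine (Finset.card_equiv E ?_).symm
    intro x
    simp [hE, Equiv.ofBijective]
  have step2 : (Finset.univ.filter
        (fun x : Equiv.Perm (Fin m) × Fin (m+1) => lpk (ins x.1 x.2) = k)).card
      = ∑ σ : Equiv.Perm (Fin m),
          (Finset.univ.filter (fun p : Fin (m+1) => lpk (ins σ p) = k)).card := by
    rw [Finset.card_filter]
    rw [Fintype.sum_prod_type]
    congr 1
    ext σ
    rw [Finset.card_filter]
  have inner : ∀ σ : Equiv.Perm (Fin m),
      (Finset.univ.filter (fun p : Fin (m+1) => lpk (ins σ p) = k)).card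
        = (if lpk σ = k then 2*k+1 else 0) + (if lpk σ = k - 1 then m - 2*(k-1) else 0) := by
    intro σ
    by_cases h1 : lpk σ = k
    · have hne : lpk σ ≠ k - 1 := by omega
      rw [if_pos h1, if_neg hne, add_zero]
      have : (Finset.univ.filter (fun p : Fin (m+1) => lpk (ins σ p) = k))
          = Finset.univ.filter (fun p : Fin (m+1) => pres σ p) := by
        apply Finset.filter_congr
        intro p _
        rw [lpk_ins]
        by_cases hp : p.val = m ∨ p.val ∈ peaksF σ ∨ p.val + 1 ∈ peaksF σ
        · rw [if_pos hp, h1]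
          exact iff_of_true rfl hp
        · rw [if_neg hp]
          exact iff_of_false (by omega) hp
      rw [this, card_pres hm σ, h1]
    · by_cases h2 : lpk σ = k - 1
      · rw [if_neg h1, if_pos h2, zero_add]
        have : (Finset.univ.filter (fun p : Fin (m+1) => lpk (ins σ p) = k))
            = Finset.univ.filter (fun p : Fin (m+1) => ¬ pres σ p) := by
          apply Finset.filter_congr
          intro p _
          rw [lpk_ins]
          by_cases hp : p.val = m ∨ p.val ∈ peaksF σ ∨ p.val + 1 ∈ peaksF σ
          · rw [if_pos hp]
            exact iff_of_false h1 (fun hh => hh hp)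
          · rw [if_neg hp]
            exact iff_of_true (by omega) hp
        rw [this]
        have hsplit := Finset.card_filter_add_card_filter_not
          (s := (Finset.univ : Finset (Fin (m+1)))) (fun p => pres σ p)
        have hcu : (Finset.univ : Finset (Fin (m+1))).card = m + 1 := by
          simp
        rw [card_pres hm σ, h2] at hsplit
        omega
      · rw [if_neg h1, if_neg h2]
        have : (Finset.univ.filter (fun p : Fin (m+1) => lpk (ins σ p) = k)) = ∅ := by
          apply Finset.filter_false_of_mem
          intro p _
          rw [lpk_ins]
          by_cases hp : p.val = m ∨ p.val ∈ peaksF σ ∨ p.val + 1 ∈ peaksF σ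
          · rw [if_pos hp]; exact h1
          · rw [if_neg hp]; omega
        rw [this, Finset.card_empty]
  have sumconst : ∀ (c j : ℕ),
      (∑ σ : Equiv.Perm (Fin m), if lpk σ = j then c else 0) = c * lcount m j := by
    intro c j
    rw [← Finset.sum_filter, Finset.sum_const, smul_eq_mul, mul_comm]
    rfl
  rw [step1, step2]
  calc (∑ σ : Equiv.Perm (Fin m),
          (Finset.univ.filter (fun p : Fin (m+1) => lpk (ins σ p) = k)).card)
      = ∑ σ : Equiv.Perm (Fin m),
          ((if lpk σ = k then 2*k+1 else 0) + (if lpk σ = k - 1 then m - 2*(k-1) else 0)) := by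
        exact Finset.sum_congr rfl (fun σ _ => inner σ)
    _ = (∑ σ : Equiv.Perm (Fin m), if lpk σ = k then 2*k+1 else 0)
          + (∑ σ : Equiv.Perm (Fin m), if lpk σ = k - 1 then m - 2*(k-1) else 0) :=
        Finset.sum_add_distrib
    _ = (2*k+1) * lcount m k + (m - 2*(k-1)) * lcount m (k-1) := by
        rw [sumconst, sumconst]
lemma pval_pos {n : ℕ} (π : Equiv.Perm (Fin n)) (j : ℕ) (h1 : 1 ≤ j) (h2 : j ≤ n) :
    1 ≤ pval π j := by
  unfold pval; rw [dif_pos ⟨h1, h2⟩]; omega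

lemma pval_inj {n : ℕ} (π : Equiv.Perm (Fin n)) {i j : ℕ} (h1 : 1 ≤ i) (h2 : i ≤ n)
    (h3 : 1 ≤ j) (h4 : j ≤ n) (h : pval π i = pval π j) : i = j := by
  unfold pval at h
  rw [dif_pos ⟨h1, h2⟩, dif_pos ⟨h3, h4⟩] at h
  have h' : π ⟨i-1, by omega⟩ = π ⟨j-1, by omega⟩ := Fin.ext (by omega)
  have := π.injective h'
  have := Fin.mk.inj_iff.mp this
  omega

lemma pval_one {n : ℕ} (j : ℕ) (h1 : 1 ≤ j) (h2 : j ≤ n) :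
    pval (1 : Equiv.Perm (Fin n)) j = j := by
  unfold pval
  rw [dif_pos ⟨h1, h2⟩]
  simp
  omega

lemma lpk_one {n : ℕ} : lpk (1 : Equiv.Perm (Fin n)) = 0 := by
  rw [lpk_eq, Finset.card_eq_zero]
  rw [Finset.eq_empty_iff_forall_notMem]
  intro i hi
  rw [mem_peaksF] at hi
  obtain ⟨⟨h1, h2⟩, _, hc2⟩ := hi
  rw [pval_one i h1 (by omega), pval_one (i+1) (by omega) (by omega)] at hc2
  omega

lemma mono_of_lpk_zero {n : ℕ} (π : Equiv.Perm (Fin n)) (h : lpk π = 0) :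
    ∀ i : ℕ, 1 ≤ i → i ≤ n → pval π (i - 1) < pval π i := by
  intro i
  induction i with
  | zero => omega
  | succ i ih =>
    intro _ hle
    rcases Nat.eq_zero_or_pos i with hz | hpos
    · subst hz
      rw [pval_zero]
      exact pval_pos π 1 le_rfl (by omega)
    · have hprev : pval π (i - 1) < pval π i := ih hpos (by omega)
      have hnp : i ∉ peaksF π := by
        rw [lpk_eq, Finset.card_eq_zero] at h
        rw [h]
        exact Finset.notMem_empty i
      rw [mem_peaksF] at hnp
      push_neg at hnp
      have hne : pval π i ≠ pval π (i+1) := by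
        intro he
        have := pval_inj π (by omega) (by omega) (by omega : (1:ℕ) ≤ i+1) hle he
        omega
      have := hnp ⟨hpos, by omega⟩ hprev
      rw [Nat.add_sub_cancel]
      omega

lemma shift_of_lpk_zero {n : ℕ} (π : Equiv.Perm (Fin n)) (h : lpk π = 0) :
    ∀ d i : ℕ, 1 ≤ i → i + d ≤ n → pval π i + d ≤ pval π (i + d) := by
  intro d
  induction d with
  | zero => intro i _ _; simp
  | succ d ih =>
    intro i h1 h2
    have hd := ih i h1 (by omega)
    have hm := mono_of_lpk_zero π h (i + d + 1) (by omega) (by omega)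
    rw [Nat.add_sub_cancel] at hm
    have : i + (d + 1) = i + d + 1 := by omega
    rw [this]
    omega

lemma pval_eq_of_lpk_zero {n : ℕ} (π : Equiv.Perm (Fin n)) (h : lpk π = 0)
    (i : ℕ) (h1 : 1 ≤ i) (h2 : i ≤ n) : pval π i = i := by
  have hub : pval π i + (n - i) ≤ pval π n := by
    have := shift_of_lpk_zero π h (n - i) i h1 (by omega)
    rwa [show i + (n - i) = n by omega] at this
  have hlo : pval π 1 + (i - 1) ≤ pval π i := by
    have := shift_of_lpk_zero π h (i - 1) 1 le_rfl (by omega)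
    rwa [show 1 + (i - 1) = i by omega] at this
  have := pval_pos π 1 le_rfl (by omega)
  have := pval_le π n
  omega

lemma eq_one_of_lpk_zero {n : ℕ} (π : Equiv.Perm (Fin n)) (h : lpk π = 0) : π = 1 := by
  apply Equiv.ext
  intro j
  have hj := pval_eq_of_lpk_zero π h (j.val + 1) (by omega) (by omega)
  unfold pval at hj
  rw [dif_pos ⟨by omega, by omega⟩] at hj
  have hje : (⟨j.val + 1 - 1, by omega⟩ : Fin n) = j := by ext; simp
  rw [hje] at hj
  have : (π j).val = j.val := by omega
  simp only [Equiv.Perm.one_apply]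
  exact Fin.ext this

lemma lcount_zero {n : ℕ} (hn : 1 ≤ n) : lcount n 0 = 1 := by
  unfold lcount
  have : (Finset.univ.filter (fun π : Equiv.Perm (Fin n) => lpk π = 0)) = {1} := by
    ext π
    simp only [Finset.mem_filter, Finset.mem_univ, true_and, Finset.mem_singleton]
    constructor
    · exact eq_one_of_lpk_zero π
    · rintro rfl; exact lpk_one
  rw [this, Finset.card_singleton]

theorem stmt5 :
    (∀ n k : ℕ, 2 ≤ n → 1 ≤ k →
        lcount n k =
          (2 * k + 1) * lcount (n - 1) k + (n + 1 - 2 * k) * lcount (n - 1) (k - 1)) ∧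
    ∀ n : ℕ, 1 ≤ n → lcount n 0 = 1 := by
  constructor
  · intro n k hn hk
    obtain ⟨m, rfl⟩ : ∃ m, n = m + 1 := ⟨n - 1, by omega⟩
    have hm : 1 ≤ m := by omega
    rw [main_rec hm hk]
    simp only [Nat.add_sub_cancel]
    congr 2
    omega
  · intro n hn
    exact lcount_zero hn
end

section
/- Define on the group algebra of S_n the element φ⁺_n(m) = Σ_{π∈S_n} (op⁺_π(m)/m^n)·π where op⁺_π(m) = C(n-1+m-des(π), n). Then for all positive integers k and l, φ⁺_n(k)·φ⁺_n(l) = φ⁺_n(kl). -/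
/-- The group-algebra element $φ⁺_n(m) = Σ_π (op⁺_π(m)/m^n)·π$. -/
noncomputable def phiPlus (n m : ℕ) : MonoidAlgebra ℚ (Equiv.Perm (Fin n)) :=
  ∑ π : Equiv.Perm (Fin n),
    MonoidAlgebra.single π ((Nat.choose (n - 1 + m - des π) n : ℚ) / (m : ℚ) ^ n)

namespace Stmt9Aux

variable {n : ℕ}

lemma chain_le (G : ∀ i : ℕ, i < n → ℕ) :
    ∀ (b : ℕ) (hb : b < n) (a : ℕ) (ha : a < n), a ≤ b →
    (∀ (j : ℕ) (hj : a ≤ j) (hj' : j + 1 ≤ b), G j (by omega) ≤ G (j+1) (by omega)) →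
    G a ha ≤ G b hb := by
  intro b
  induction b with
  | zero =>
    intro hb a ha hab _
    obtain rfl : a = 0 := by omega
    exact le_rfl
  | succ b ih =>
    intro hb a ha hab step
    rcases Nat.eq_or_lt_of_le hab with rfl | hlt
    · exact le_rfl
    · have hb' : b < n := by omega
      have h1 : G a ha ≤ G b hb' := ih hb' a ha (by omega) (fun j hj hj' => step j hj (by omega))
      exact h1.trans (step b (by omega) le_rfl)

lemma chain_add (G : ∀ i : ℕ, i < n → ℕ) :
    ∀ (b : ℕ) (hb : b < n) (a : ℕ) (ha : a < n), a ≤ b →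
    (∀ (j : ℕ) (hj : a ≤ j) (hj' : j + 1 ≤ b), G j (by omega) + 1 ≤ G (j+1) (by omega)) →
    G a ha + (b - a) ≤ G b hb := by
  intro b
  induction b with
  | zero =>
    intro hb a ha hab _
    obtain rfl : a = 0 := by omega
    simp
  | succ b ih =>
    intro hb a ha hab step
    rcases Nat.eq_or_lt_of_le hab with rfl | hlt
    · simp
    · have hb' : b < n := by omega
      have h1 : G a ha + (b - a) ≤ G b hb' := ih hb' a ha (by omega) (fun j hj hj' => step j hj (by omega))
      have h2 := step b (by omega) le_rfl
      omega

def dscB (π : Equiv.Perm (Fin n)) (j : ℕ) : Bool :=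
  if h : j + 1 < n then decide ((π ⟨j+1, h⟩ : ℕ) < (π ⟨j, by omega⟩ : ℕ)) else false

lemma dscB_true_iff (π : Equiv.Perm (Fin n)) {j : ℕ} (h : j + 1 < n) :
    dscB π j = true ↔ (π ⟨j+1, h⟩ : ℕ) < (π ⟨j, by omega⟩ : ℕ) := by
  simp [dscB, h]

lemma dscB_of_ge (π : Equiv.Perm (Fin n)) {j : ℕ} (h : ¬ j + 1 < n) : dscB π j = false := by
  simp [dscB, h]

def dct (π : Equiv.Perm (Fin n)) (i : ℕ) : ℕ :=
  ((Finset.range i).filter (fun j => dscB π j)).card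

lemma dct_le (π : Equiv.Perm (Fin n)) (i : ℕ) : dct π i ≤ i :=
  le_trans (Finset.card_filter_le _ _) (Finset.card_range i).le

lemma dct_succ_true (π : Equiv.Perm (Fin n)) {i : ℕ} (h : dscB π i = true) :
    dct π (i+1) = dct π i + 1 := by
  unfold dct
  rw [Finset.range_add_one, Finset.filter_insert, if_pos h,
    Finset.card_insert_of_notMem (by simp)]

lemma dct_succ_false (π : Equiv.Perm (Fin n)) {i : ℕ} (h : dscB π i = false) :
    dct π (i+1) = dct π i := by
  unfold dct
  rw [Finset.range_add_one, Finset.filter_insert, if_neg (by simp [h])]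

lemma dct_le_add (π : Equiv.Perm (Fin n)) {a b : ℕ} (hab : a ≤ b) :
    dct π b ≤ dct π a + (b - a) := by
  induction b with
  | zero =>
    obtain rfl : a = 0 := by omega
    omega
  | succ b ih =>
    rcases Nat.eq_or_lt_of_le hab with rfl | hlt
    · omega
    · have := ih (by omega)
      cases h : dscB π b
      · rw [dct_succ_false π h]; omega
      · rw [dct_succ_true π h]; omega

lemma dct_le_top (π : Equiv.Perm (Fin n)) (i : ℕ) : dct π i ≤ dct π (n - 1) := by
  apply Finset.card_le_card
  intro j hj
  simp only [Finset.mem_filter, Finset.mem_range] at hj ⊢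
  refine ⟨?_, hj.2⟩
  by_contra hc
  have : ¬ (j + 1 < n) := by omega
  rw [dscB_of_ge π this] at hj
  simpa using hj.2

lemma des_eq_dct (π : Equiv.Perm (Fin n)) : des π = dct π (n - 1) := by
  unfold des dct
  apply Finset.card_nbij' (fun a => a - 1) (fun b => b + 1)
  · intro a ha
    simp only [Finset.coe_filter, Set.mem_setOf_eq, Finset.mem_filter, Finset.mem_Icc] at ha
    obtain ⟨⟨h1, h2⟩, h3⟩ := ha
    have hn : 2 ≤ n := by
      by_contra hc
      interval_cases n <;> omega
    simp only [Finset.coe_filter, Set.mem_setOf_eq, Finset.mem_filter, Finset.mem_range]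
    constructor
    · omega
    · have hlt : a - 1 + 1 < n := by omega
      rw [dscB_true_iff π hlt]
      rw [pval, pval] at h3
      rw [dif_pos (by omega), dif_pos (by omega)] at h3
      have e1 : (⟨a - 1 + 1, hlt⟩ : Fin n) = ⟨a + 1 - 1, by omega⟩ := by
        apply Fin.ext; simp; omega
      have e2 : (⟨a - 1, by omega⟩ : Fin n) = ⟨a - 1, by omega⟩ := rfl
      rw [e1]
      omega
  · intro b hb
    simp only [Finset.coe_filter, Set.mem_setOf_eq, Finset.mem_filter, Finset.mem_range] at hb
    obtain ⟨h1, h2⟩ := hb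
    have hlt : b + 1 < n := by
      by_contra hc
      rw [dscB_of_ge π hc] at h2
      simp at h2
    rw [dscB_true_iff π hlt] at h2
    simp only [Finset.coe_filter, Set.mem_setOf_eq, Finset.mem_filter, Finset.mem_Icc]
    refine ⟨⟨by omega, by omega⟩, ?_⟩
    rw [pval, pval, dif_pos (by omega), dif_pos (by omega)]
    have e1 : (⟨b + 1 - 1, by omega⟩ : Fin n) = ⟨b, by omega⟩ := by apply Fin.ext; simp
    have e2 : (⟨b + 1 + 1 - 1, by omega⟩ : Fin n) = ⟨b + 1, hlt⟩ := by apply Fin.ext; simp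
    rw [e1, e2]
    omega
  · intro a ha
    simp only [Finset.coe_filter, Set.mem_setOf_eq, Finset.mem_filter, Finset.mem_Icc] at ha
    beta_reduce
    omega
  · intro b _; beta_reduce; omega

lemma des_le (π : Equiv.Perm (Fin n)) : des π ≤ n - 1 := by
  rw [des_eq_dct]; exact dct_le π _

lemma dct_le_des (π : Equiv.Perm (Fin n)) (i : ℕ) : dct π i ≤ des π := by
  rw [des_eq_dct]; exact dct_le_top π i

lemma des_le_dct_add (π : Equiv.Perm (Fin n)) {i : ℕ} (hi : i < n) :
    des π ≤ dct π i + (n - 1 - i) := by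
  rw [des_eq_dct]
  rcases le_or_gt i (n-1) with h | h
  · exact dct_le_add π h
  · have := dct_le_top π i
    omega

def Compat {n m : ℕ} (π : Equiv.Perm (Fin n)) (f : Fin n → Fin m) : Prop :=
  ∀ (j : ℕ) (h : j + 1 < n),
    ((f ⟨j, by omega⟩ : ℕ) ≤ (f ⟨j+1, h⟩ : ℕ)) ∧
    ((π ⟨j+1, h⟩ : ℕ) < (π ⟨j, by omega⟩ : ℕ) → (f ⟨j, by omega⟩ : ℕ) < (f ⟨j+1, h⟩ : ℕ))

lemma compat_mono {m : ℕ} {π : Equiv.Perm (Fin n)} {f : Fin n → Fin m} (hf : Compat π f)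
    {a b : Fin n} (hab : a ≤ b) : (f a : ℕ) ≤ (f b : ℕ) := by
  have := chain_le (fun i h => (f ⟨i, h⟩ : ℕ)) b.1 b.2 a.1 a.2 hab
    (fun j hj hj' => (hf j (by omega)).1)
  simpa using this

lemma compat_strict {m : ℕ} {π : Equiv.Perm (Fin n)} {g : Fin n → Fin m} (hg : Compat π g)
    {a b : Fin n} (hab : a < b) (hd : (π b : ℕ) < (π a : ℕ)) : (g a : ℕ) < (g b : ℕ) := by
  rcases em (∃ j, ∃ h : j + 1 < n, a.1 ≤ j ∧ j + 1 ≤ b.1 ∧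
      (π ⟨j+1, h⟩ : ℕ) < (π ⟨j, by omega⟩ : ℕ)) with ⟨j, h, hja, hjb, hjd⟩ | hno
  · have h1 : (g a : ℕ) ≤ (g ⟨j, by omega⟩ : ℕ) := compat_mono hg (by simp [Fin.le_def]; omega)
    have h2 : (g ⟨j, by omega⟩ : ℕ) < (g ⟨j+1, h⟩ : ℕ) := (hg j h).2 hjd
    have h3 : (g ⟨j+1, h⟩ : ℕ) ≤ (g b : ℕ) := compat_mono hg (by simp [Fin.le_def]; omega)
    omega
  · push_neg at hno
    have : (π a : ℕ) ≤ (π b : ℕ) := by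
      have := chain_le (fun i h => (π ⟨i, h⟩ : ℕ)) b.1 b.2 a.1 a.2 (le_of_lt hab)
        (fun j hj hj' => hno j (by omega) hj hj')
      simpa using this
    omega


lemma compat_intro {m : ℕ} {π : Equiv.Perm (Fin n)} {f : Fin n → Fin m}
    (H : ∀ a b : Fin n, b.1 = a.1 + 1 →
      ((f a : ℕ) ≤ (f b : ℕ) ∧ ((π b : ℕ) < (π a : ℕ) → (f a : ℕ) < (f b : ℕ)))) :
    Compat π f :=
  fun j h => H ⟨j, by omega⟩ ⟨j+1, h⟩ rfl

lemma compat_elim {m : ℕ} {π : Equiv.Perm (Fin n)} {f : Fin n → Fin m} (hf : Compat π f)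
    (a b : Fin n) (hab : b.1 = a.1 + 1) :
    (f a : ℕ) ≤ (f b : ℕ) ∧ ((π b : ℕ) < (π a : ℕ) → (f a : ℕ) < (f b : ℕ)) := by
  obtain ⟨bv, hbv⟩ := b
  simp only at hab
  subst hab
  exact hf a.1 hbv

lemma dscB_true_iff' {π : Equiv.Perm (Fin n)} {a b : Fin n} (hab : b.1 = a.1 + 1) :
    dscB π a.1 = true ↔ (π b : ℕ) < (π a : ℕ) := by
  obtain ⟨bv, hbv⟩ := b
  simp only at hab
  subst hab
  exact dscB_true_iff π hbv

lemma card_subtype_finset (M : ℕ) :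
    Nat.card {s : Finset (Fin M) // s.card = n} = M.choose n := by
  have e : {s : Finset (Fin M) // s.card = n} ≃
      {s // s ∈ (Finset.univ : Finset (Fin M)).powersetCard n} :=
    Equiv.subtypeEquivRight (fun s => by simp [Finset.mem_powersetCard])
  rw [Nat.card_congr e, Nat.card_eq_finsetCard, Finset.card_powersetCard, Finset.card_univ,
    Fintype.card_fin]

def gmap (π : Equiv.Perm (Fin n)) {m : ℕ} (f : Fin n → Fin m)
    (i : Fin n) : Fin (n - 1 + m - des π) :=
  ⟨(f i : ℕ) + (i.1 - dct π i.1), by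
    have h1 : dct π i.1 ≤ i.1 := dct_le π i.1
    have h2 : des π ≤ dct π i.1 + (n - 1 - i.1) := des_le_dct_add π i.2
    have h3 : (f i : ℕ) < m := (f i).2
    have h4 : i.1 < n := i.2
    have h5 : des π ≤ n - 1 := des_le π
    omega⟩

lemma gmap_strictMono (π : Equiv.Perm (Fin n)) {m : ℕ} {f : Fin n → Fin m}
    (hf : Compat π f) : StrictMono (gmap π f) := by
  intro a b hab
  have key' : (gmap π f a : ℕ) + (b.1 - a.1) ≤ (gmap π f b : ℕ) :=
    chain_add (fun i h => (gmap π f ⟨i, h⟩ : ℕ)) b.1 b.2 a.1 a.2 (le_of_lt hab)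
    (fun j hj hj' => by
      show (f ⟨j, by omega⟩ : ℕ) + (j - dct π j) + 1 ≤
        (f ⟨j+1, by omega⟩ : ℕ) + ((j+1) - dct π (j+1))
      have hd1 : dct π j ≤ j := dct_le π j
      cases hd : dscB π j
      · rw [dct_succ_false π hd]
        have := (hf j (by omega)).1
        omega
      · rw [dct_succ_true π hd]
        have := (hf j (by omega)).2 ((dscB_true_iff π (by omega)).1 hd)
        omega)
  have hab' : a.1 < b.1 := hab
  rw [Fin.lt_def]
  omega

theorem card_compat (π : Equiv.Perm (Fin n)) {m : ℕ} (hm : 1 ≤ m) :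
    Nat.card {f : Fin n → Fin m // Compat π f} = (n - 1 + m - des π).choose n := by
  have hdes : des π ≤ n - 1 := des_le π
  have hTcard : ∀ x : {f : Fin n → Fin m // Compat π f},
      (Finset.univ.image (gmap π x.1)).card = n := by
    intro x
    rw [Finset.card_image_of_injective _ (gmap_strictMono π x.2).injective, Finset.card_univ,
      Fintype.card_fin]
  let T : {f : Fin n → Fin m // Compat π f} →
      {s : Finset (Fin (n - 1 + m - des π)) // s.card = n} :=
    fun x => ⟨Finset.univ.image (gmap π x.1), hTcard x⟩
  -- lower/upper bounds for orderEmbOfFin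
  have estep : ∀ (s : Finset (Fin (n - 1 + m - des π))) (hs : s.card = n) (a b : Fin n),
      a.1 < b.1 → (s.orderEmbOfFin hs a : ℕ) < (s.orderEmbOfFin hs b : ℕ) := by
    intro s hs a b hab
    exact (s.orderEmbOfFin hs).strictMono hab
  have eLB : ∀ (s : Finset (Fin (n - 1 + m - des π))) (hs : s.card = n) (i : Fin n),
      i.1 ≤ (s.orderEmbOfFin hs i : ℕ) := by
    intro s hs i
    have key' : (s.orderEmbOfFin hs ⟨0, i.pos⟩ : ℕ) + (i.1 - 0) ≤ (s.orderEmbOfFin hs i : ℕ) :=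
      chain_add (fun j h => (s.orderEmbOfFin hs ⟨j, h⟩ : ℕ)) i.1 i.2 0 i.pos (Nat.zero_le _)
        (fun j hj hj' => estep s hs ⟨j, by omega⟩ ⟨j+1, by omega⟩ (by simp))
    omega
  have eUB : ∀ (s : Finset (Fin (n - 1 + m - des π))) (hs : s.card = n) (i : Fin n),
      (s.orderEmbOfFin hs i : ℕ) + (n - 1 - i.1) ≤ (n - 1 + m - des π) - 1 := by
    intro s hs i
    have hn : 0 < n := i.pos
    have htop : n - 1 < n := by omega
    have key' : (s.orderEmbOfFin hs i : ℕ) + ((n-1) - i.1) ≤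
        (s.orderEmbOfFin hs ⟨n-1, htop⟩ : ℕ) :=
      chain_add (fun j h => (s.orderEmbOfFin hs ⟨j, h⟩ : ℕ)) (n-1) htop i.1 i.2
        (by omega) (fun j hj hj' => estep s hs ⟨j, by omega⟩ ⟨j+1, by omega⟩ (by simp))
    have h2 : (s.orderEmbOfFin hs ⟨n-1, htop⟩ : ℕ) < n - 1 + m - des π :=
      (s.orderEmbOfFin hs ⟨n-1, htop⟩).2
    omega
  have hIbound : ∀ (s : Finset (Fin (n - 1 + m - des π))) (hs : s.card = n) (i : Fin n),
      (s.orderEmbOfFin hs i : ℕ) - (i.1 - dct π i.1) < m := by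
    intro s hs i
    have h1 := eUB s hs i
    have h2 : dct π i.1 ≤ des π := dct_le_des π i.1
    have h3 : dct π i.1 ≤ i.1 := dct_le π i.1
    have h4 : i.1 < n := i.2
    omega
  have hIcompat : ∀ (s : Finset (Fin (n - 1 + m - des π))) (hs : s.card = n),
      Compat π (fun i => (⟨(s.orderEmbOfFin hs i : ℕ) - (i.1 - dct π i.1),
        hIbound s hs i⟩ : Fin m)) := by
    intro s hs
    apply compat_intro
    intro a b hab
    have h1 := estep s hs a b (by omega)
    have h2 := eLB s hs a
    have h3 : dct π a.1 ≤ a.1 := dct_le π a.1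
    have hbv : b.1 = a.1 + 1 := hab
    refine ⟨?_, ?_⟩
    · show (s.orderEmbOfFin hs a : ℕ) - (a.1 - dct π a.1) ≤
        (s.orderEmbOfFin hs b : ℕ) - (b.1 - dct π b.1)
      cases hd : dscB π a.1
      · have hdb : dct π b.1 = dct π a.1 := by rw [hbv, dct_succ_false π hd]
        omega
      · have hdb : dct π b.1 = dct π a.1 + 1 := by rw [hbv, dct_succ_true π hd]
        omega
    · intro hdesc
      show (s.orderEmbOfFin hs a : ℕ) - (a.1 - dct π a.1) <
        (s.orderEmbOfFin hs b : ℕ) - (b.1 - dct π b.1)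
      have hd := (dscB_true_iff' hab).2 hdesc
      have hdb : dct π b.1 = dct π a.1 + 1 := by rw [hbv, dct_succ_true π hd]
      omega
  let I : {s : Finset (Fin (n - 1 + m - des π)) // s.card = n} →
      {f : Fin n → Fin m // Compat π f} :=
    fun s => ⟨_, hIcompat s.1 s.2⟩
  have left : Function.LeftInverse I T := by
    intro x
    obtain ⟨f, hf⟩ := x
    have hkey : gmap π f = ⇑((Finset.univ.image (gmap π f)).orderEmbOfFin (hTcard ⟨f, hf⟩)) :=
      Finset.orderEmbOfFin_unique _ (fun x => Finset.mem_image_of_mem _ (Finset.mem_univ x))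
        (gmap_strictMono π hf)
    apply Subtype.ext
    funext i
    apply Fin.ext
    show ((Finset.univ.image (gmap π f)).orderEmbOfFin (hTcard ⟨f, hf⟩) i : ℕ)
        - (i.1 - dct π i.1) = (f i : ℕ)
    rw [← congrFun hkey i]
    show ((f i : ℕ) + (i.1 - dct π i.1)) - (i.1 - dct π i.1) = (f i : ℕ)
    omega
  have right : Function.RightInverse I T := by
    intro x
    obtain ⟨s, hs⟩ := x
    apply Subtype.ext
    show Finset.univ.image (gmap π _) = s
    have hgm : ∀ i : Fin n, gmap π (I ⟨s, hs⟩).1 i = s.orderEmbOfFin hs i := by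
      intro i
      apply Fin.ext
      show ((s.orderEmbOfFin hs i : ℕ) - (i.1 - dct π i.1)) + (i.1 - dct π i.1)
        = (s.orderEmbOfFin hs i : ℕ)
      have h1 := eLB s hs i
      have h3 : dct π i.1 ≤ i.1 := dct_le π i.1
      omega
    have heq : gmap π (I ⟨s, hs⟩).1 = fun i => s.orderEmbOfFin hs i := funext hgm
    rw [heq]
    ext x
    simp only [Finset.mem_image, Finset.mem_univ, true_and]
    constructor
    · rintro ⟨i, rfl⟩
      exact Finset.orderEmbOfFin_mem s hs i
    · intro hx
      have hxr : x ∈ Set.range ⇑(s.orderEmbOfFin hs) := by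
        rw [Finset.range_orderEmbOfFin]
        exact hx
      obtain ⟨i, hi⟩ := hxr
      exact ⟨i, hi⟩
  have hbij : Function.Bijective T := Function.bijective_iff_has_inverse.2 ⟨I, left, right⟩
  rw [Nat.card_congr (Equiv.ofBijective T hbij), card_subtype_finset]


-- Part 3 : the key bijection
def keyF (σ : Equiv.Perm (Fin n)) (k : ℕ) {m : ℕ} (h : Fin n → Fin m) : Fin n → ℕ :=
  fun i => (σ i : ℕ) + ((h i : ℕ) % k) * n

lemma keyF_inj (σ : Equiv.Perm (Fin n)) (k : ℕ) {m : ℕ} (h : Fin n → Fin m) :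
    Function.Injective (keyF σ k h) := by
  intro i j hij
  have e1 : keyF σ k h i % n = (σ i : ℕ) := by
    unfold keyF
    rw [Nat.add_mul_mod_self_right, Nat.mod_eq_of_lt (σ i).2]
  have e2 : keyF σ k h j % n = (σ j : ℕ) := by
    unfold keyF
    rw [Nat.add_mul_mod_self_right, Nat.mod_eq_of_lt (σ j).2]
  exact σ.injective (Fin.ext (by rw [← e1, hij, e2]))

lemma keyF_lt_iff (σ : Equiv.Perm (Fin n)) (k : ℕ) {m : ℕ} (h : Fin n → Fin m) (i j : Fin n) :
    keyF σ k h i < keyF σ k h j ↔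
      ((h i : ℕ) % k < (h j : ℕ) % k ∨
        ((h i : ℕ) % k = (h j : ℕ) % k ∧ (σ i : ℕ) < (σ j : ℕ))) := by
  have hσi := (σ i).2
  have hσj := (σ j).2
  unfold keyF
  constructor
  · intro hK
    rcases lt_trichotomy ((h i : ℕ) % k) ((h j : ℕ) % k) with hc | hc | hc
    · exact Or.inl hc
    · rw [hc] at hK ⊢
      right
      exact ⟨rfl, by omega⟩
    · exfalso
      have h1 : ((h j : ℕ) % k + 1) * n ≤ ((h i : ℕ) % k) * n :=
        Nat.mul_le_mul_right n (by omega)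
      rw [Nat.succ_mul] at h1
      omega
  · rintro (hc | ⟨hc, hσ⟩)
    · have h1 : ((h i : ℕ) % k + 1) * n ≤ ((h j : ℕ) % k) * n :=
        Nat.mul_le_mul_right n (by omega)
      rw [Nat.succ_mul] at h1
      omega
    · rw [hc]
      omega

def sortPerm (σ : Equiv.Perm (Fin n)) (k : ℕ) {m : ℕ} (h : Fin n → Fin m) :
    Equiv.Perm (Fin n) :=
  Tuple.sort (keyF σ k h)

lemma sortPerm_strictMono (σ : Equiv.Perm (Fin n)) (k : ℕ) {m : ℕ} (h : Fin n → Fin m) :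
    StrictMono (keyF σ k h ∘ ⇑(sortPerm σ k h)) :=
  (Tuple.monotone_sort _).strictMono_of_injective
    ((keyF_inj σ k h).comp (Equiv.injective _))

def divMap {k l : ℕ} (hk : 0 < k) (h : Fin n → Fin (k * l)) : Fin n → Fin l :=
  fun i => ⟨(h i : ℕ) / k, by rw [Nat.div_lt_iff_lt_mul hk]; exact lt_of_lt_of_le (h i).2 (le_of_eq (Nat.mul_comm k l))⟩

def modMap {k m : ℕ} (hk : 0 < k) (θ : Equiv.Perm (Fin n)) (h : Fin n → Fin m) :
    Fin n → Fin k :=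
  fun j => ⟨(h (θ j) : ℕ) % k, Nat.mod_lt _ hk⟩

theorem key_card (σ : Equiv.Perm (Fin n)) {k l : ℕ} (hk : 0 < k) :
    Nat.card {x : Equiv.Perm (Fin n) × (Fin n → Fin k) × (Fin n → Fin l) //
      Compat (σ * x.1⁻¹) x.2.1 ∧ Compat x.1 x.2.2}
    = Nat.card {h : Fin n → Fin (k * l) // Compat σ h} := by
  -- the forward map
  have hTbound : ∀ (f : Fin n → Fin l) (g : Fin n → Fin k) (τ : Equiv.Perm (Fin n)) (i : Fin n),
      k * (f i : ℕ) + (g (τ i) : ℕ) < k * l := by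
    intro f g τ i
    have h1 : (f i : ℕ) + 1 ≤ l := (f i).2
    have h2 : k * ((f i : ℕ) + 1) ≤ k * l := Nat.mul_le_mul_left k h1
    have h3 : k * ((f i : ℕ) + 1) = k * (f i : ℕ) + k := Nat.mul_succ k _
    have h4 : (g (τ i) : ℕ) < k := (g (τ i)).2
    omega
  have hTcompat : ∀ (x : {x : Equiv.Perm (Fin n) × (Fin n → Fin k) × (Fin n → Fin l) //
      Compat (σ * x.1⁻¹) x.2.1 ∧ Compat x.1 x.2.2}),
      Compat σ (fun i => (⟨k * (x.1.2.2 i : ℕ) + (x.1.2.1 (x.1.1 i) : ℕ),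
        hTbound x.1.2.2 x.1.2.1 x.1.1 i⟩ : Fin (k * l))) := by
    rintro ⟨⟨τ, g, f⟩, hg, hf⟩
    have hg' : Compat (σ * τ⁻¹) g := hg
    have hf' : Compat τ f := hf
    apply compat_intro
    intro a b hab
    have hfw := (compat_elim hf' a b hab).1
    have hgb1 : (g (τ a) : ℕ) < k := (g (τ a)).2
    have hgb2 : (g (τ b) : ℕ) < k := (g (τ b)).2
    by_cases hlt : (f a : ℕ) < (f b : ℕ)
    · have h2 : k * ((f a : ℕ) + 1) ≤ k * (f b : ℕ) := Nat.mul_le_mul_left k (by omega)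
      have h3 : k * ((f a : ℕ) + 1) = k * (f a : ℕ) + k := Nat.mul_succ k _
      constructor
      · show k * (f a : ℕ) + (g (τ a) : ℕ) ≤ k * (f b : ℕ) + (g (τ b) : ℕ)
        omega
      · intro _
        show k * (f a : ℕ) + (g (τ a) : ℕ) < k * (f b : ℕ) + (g (τ b) : ℕ)
        omega
    · have hfe : (f a : ℕ) = (f b : ℕ) := by omega
      have hmul : k * (f a : ℕ) = k * (f b : ℕ) := by rw [hfe]
      have hτne : (τ a : ℕ) ≠ (τ b : ℕ) := by
        intro hc
        have : a = b := τ.injective (Fin.ext hc)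
        rw [this] at hab
        omega
      have hτnlt : ¬ ((τ b : ℕ) < (τ a : ℕ)) := by
        intro hd
        exact absurd ((compat_elim hf' a b hab).2 hd) (by omega)
      have hτlt : τ a < τ b := by
        rw [Fin.lt_def]
        omega
      constructor
      · show k * (f a : ℕ) + (g (τ a) : ℕ) ≤ k * (f b : ℕ) + (g (τ b) : ℕ)
        have := compat_mono hg' (le_of_lt hτlt)
        omega
      · intro hd
        show k * (f a : ℕ) + (g (τ a) : ℕ) < k * (f b : ℕ) + (g (τ b) : ℕ)
        have hd' : ((σ * τ⁻¹) (τ b) : ℕ) < ((σ * τ⁻¹) (τ a) : ℕ) := by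
          simp only [Equiv.Perm.mul_apply, Equiv.Perm.coe_inv, Equiv.symm_apply_apply]
          exact hd
        have := compat_strict hg' hτlt hd'
        omega
  let T : {x : Equiv.Perm (Fin n) × (Fin n → Fin k) × (Fin n → Fin l) //
      Compat (σ * x.1⁻¹) x.2.1 ∧ Compat x.1 x.2.2} →
      {h : Fin n → Fin (k * l) // Compat σ h} :=
    fun x => ⟨_, hTcompat x⟩
  -- the inverse map
  have hIf : ∀ (h : Fin n → Fin (k * l)), Compat σ h →
      Compat (sortPerm σ k h)⁻¹ (divMap hk h) := by
    intro h hh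
    apply compat_intro
    intro a b hab
    have hmono : (h a : ℕ) ≤ (h b : ℕ) := (compat_elim hh a b hab).1
    have hdivle : (h a : ℕ) / k ≤ (h b : ℕ) / k := Nat.div_le_div_right hmono
    constructor
    · exact hdivle
    · intro hd
      show (h a : ℕ) / k < (h b : ℕ) / k
      by_contra hcon
      have hdiv : (h a : ℕ) / k = (h b : ℕ) / k := by omega
      have e1 : k * ((h a : ℕ) / k) + (h a : ℕ) % k = (h a : ℕ) := Nat.div_add_mod _ _
      have e2 : k * ((h b : ℕ) / k) + (h b : ℕ) % k = (h b : ℕ) := Nat.div_add_mod _ _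
      rw [hdiv] at e1
      -- from τ-descent get key comparison
      have hτd : ((sortPerm σ k h)⁻¹ b : ℕ) < ((sortPerm σ k h)⁻¹ a : ℕ) := hd
      have hK : keyF σ k h (sortPerm σ k h ((sortPerm σ k h)⁻¹ b)) <
          keyF σ k h (sortPerm σ k h ((sortPerm σ k h)⁻¹ a)) :=
        sortPerm_strictMono σ k h (show (sortPerm σ k h)⁻¹ b < (sortPerm σ k h)⁻¹ a from hτd)
      rw [Equiv.Perm.coe_inv, Equiv.apply_symm_apply, Equiv.apply_symm_apply] at hK
      rcases (keyF_lt_iff σ k h b a).1 hK with hc | ⟨hc, hσ⟩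
      · omega
      · have : (h a : ℕ) = (h b : ℕ) := by omega
        have := (compat_elim hh a b hab).2 hσ
        omega
  have hIg : ∀ (h : Fin n → Fin (k * l)), Compat σ h →
      Compat (σ * ((sortPerm σ k h)⁻¹)⁻¹) (modMap hk (sortPerm σ k h) h) := by
    intro h hh
    apply compat_intro
    intro a b hab
    have hK : keyF σ k h (sortPerm σ k h a) < keyF σ k h (sortPerm σ k h b) :=
      sortPerm_strictMono σ k h (show a < b by rw [Fin.lt_def]; omega)
    rcases (keyF_lt_iff σ k h _ _).1 hK with hc | ⟨hc, hσ⟩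
    · constructor
      · show (h (sortPerm σ k h a) : ℕ) % k ≤ (h (sortPerm σ k h b) : ℕ) % k
        omega
      · intro _
        show (h (sortPerm σ k h a) : ℕ) % k < (h (sortPerm σ k h b) : ℕ) % k
        omega
    · constructor
      · show (h (sortPerm σ k h a) : ℕ) % k ≤ (h (sortPerm σ k h b) : ℕ) % k
        omega
      · intro hd
        exfalso
        have hd' : (σ (sortPerm σ k h b) : ℕ) < (σ (sortPerm σ k h a) : ℕ) := by
          have e : ∀ c : Fin n, (σ * ((sortPerm σ k h)⁻¹)⁻¹) c = σ (sortPerm σ k h c) := by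
            intro c
            simp [Equiv.Perm.mul_apply]
          rw [← e a, ← e b]
          exact hd
        omega
  let I : {h : Fin n → Fin (k * l) // Compat σ h} →
      {x : Equiv.Perm (Fin n) × (Fin n → Fin k) × (Fin n → Fin l) //
        Compat (σ * x.1⁻¹) x.2.1 ∧ Compat x.1 x.2.2} :=
    fun x => ⟨⟨(sortPerm σ k x.1)⁻¹, modMap hk (sortPerm σ k x.1) x.1, divMap hk x.1⟩,
      hIg x.1 x.2, hIf x.1 x.2⟩
  -- right inverse : T ∘ I = id
  have right : Function.RightInverse I T := by
    intro x
    obtain ⟨h, hh⟩ := x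
    apply Subtype.ext
    funext i
    apply Fin.ext
    show k * ((h i : ℕ) / k) + (h (sortPerm σ k h ((sortPerm σ k h)⁻¹ i)) : ℕ) % k = (h i : ℕ)
    rw [Equiv.Perm.coe_inv, Equiv.apply_symm_apply]
    exact Nat.div_add_mod _ _
  -- left inverse : I ∘ T = id
  have left : Function.LeftInverse I T := by
    intro x
    obtain ⟨⟨τ, g, f⟩, hg, hf⟩ := x
    have hg' : Compat (σ * τ⁻¹) g := hg
    have hf' : Compat τ f := hf
    set h : Fin n → Fin (k * l) := (T ⟨⟨τ, g, f⟩, hg, hf⟩).1 with hh_def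
    have hval : ∀ i : Fin n, (h i : ℕ) = k * (f i : ℕ) + (g (τ i) : ℕ) := fun i => rfl
    have hmod : ∀ i : Fin n, (h i : ℕ) % k = (g (τ i) : ℕ) := by
      intro i
      rw [hval i, Nat.mul_add_mod]
      exact Nat.mod_eq_of_lt (g (τ i)).2
    have hdiv : ∀ i : Fin n, (h i : ℕ) / k = (f i : ℕ) := by
      intro i
      rw [hval i, Nat.mul_add_div hk, Nat.div_eq_of_lt (g (τ i)).2]
      omega
    have hmodinv : ∀ J : Fin n, (h (τ⁻¹ J) : ℕ) % k = (g J : ℕ) := by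
      intro J
      rw [hmod (τ⁻¹ J), Equiv.Perm.coe_inv, Equiv.apply_symm_apply]
    have hmono2 : Monotone (keyF σ k h ∘ ⇑τ⁻¹) := by
      intro J J' hJJ
      rcases eq_or_lt_of_le hJJ with rfl | hJJ'
      · exact le_rfl
      · apply le_of_lt
        show keyF σ k h (τ⁻¹ J) < keyF σ k h (τ⁻¹ J')
        rw [keyF_lt_iff σ k h (τ⁻¹ J) (τ⁻¹ J')]
        rw [hmodinv J, hmodinv J']
        have h1 : (g J : ℕ) ≤ (g J' : ℕ) := compat_mono hg' (le_of_lt hJJ')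
        by_cases hc : (g J : ℕ) < (g J' : ℕ)
        · exact Or.inl hc
        · right
          refine ⟨by omega, ?_⟩
          have hne : (σ (τ⁻¹ J) : ℕ) ≠ (σ (τ⁻¹ J') : ℕ) := by
            intro hce
            exact absurd ((τ⁻¹).injective (σ.injective (Fin.ext hce)))
              (ne_of_lt hJJ')
          have hnlt : ¬ ((σ (τ⁻¹ J') : ℕ) < (σ (τ⁻¹ J) : ℕ)) := by
            intro hdd
            have hdd' : ((σ * τ⁻¹) J' : ℕ) < ((σ * τ⁻¹) J : ℕ) := hdd
            exact absurd (compat_strict hg' hJJ' hdd') (by omega)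
          omega
    have hsort : sortPerm σ k h = τ⁻¹ := by
      have huniq : keyF σ k h ∘ ⇑(sortPerm σ k h) = keyF σ k h ∘ ⇑τ⁻¹ :=
        Tuple.unique_monotone (Tuple.monotone_sort _) hmono2
      apply Equiv.ext
      intro x
      exact keyF_inj σ k h (congrFun huniq x)
    apply Subtype.ext
    show ((sortPerm σ k h)⁻¹, modMap hk (sortPerm σ k h) h, divMap hk h) = (τ, g, f)
    have hτeq : (sortPerm σ k h)⁻¹ = τ := by rw [hsort, inv_inv]
    refine Prod.ext hτeq (Prod.ext ?_ ?_)
    · show modMap hk (sortPerm σ k h) h = g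
      funext J
      apply Fin.ext
      show (h (sortPerm σ k h J) : ℕ) % k = (g J : ℕ)
      rw [hsort]
      exact hmodinv J
    · funext i
      apply Fin.ext
      exact hdiv i
  exact Nat.card_congr (Equiv.ofBijective T (Function.bijective_iff_has_inverse.2 ⟨I, left, right⟩))


-- Part 4 : assembly
lemma nat_card_sigma {ι : Type*} [Fintype ι] (f : ι → Type*) [∀ i, Finite (f i)] :
    Nat.card (Σ i, f i) = ∑ i, Nat.card (f i) := by
  classical
  letI : ∀ i, Fintype (f i) := fun i => Fintype.ofFinite _
  simp [Nat.card_eq_fintype_card]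

lemma sum_card (σ : Equiv.Perm (Fin n)) {k l : ℕ} (hk : 0 < k) (hl : 0 < l) :
    ∑ τ : Equiv.Perm (Fin n),
      ((n - 1 + k - des (σ * τ⁻¹)).choose n) * ((n - 1 + l - des τ).choose n)
    = (n - 1 + k * l - des σ).choose n := by
  have hkl : 1 ≤ k * l := Nat.one_le_iff_ne_zero.2 (Nat.mul_ne_zero (by omega) (by omega))
  symm
  calc (n - 1 + k * l - des σ).choose n
      = Nat.card {h : Fin n → Fin (k * l) // Compat σ h} := (card_compat σ hkl).symm
    _ = Nat.card {x : Equiv.Perm (Fin n) × (Fin n → Fin k) × (Fin n → Fin l) //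
          Compat (σ * x.1⁻¹) x.2.1 ∧ Compat x.1 x.2.2} := (key_card σ hk).symm
    _ = Nat.card (Σ τ : Equiv.Perm (Fin n),
          {y : (Fin n → Fin k) × (Fin n → Fin l) // Compat (σ * τ⁻¹) y.1 ∧ Compat τ y.2}) :=
        Nat.card_congr (Equiv.subtypeProdEquivSigmaSubtype
          (fun (a : Equiv.Perm (Fin n)) (y : (Fin n → Fin k) × (Fin n → Fin l)) =>
            Compat (σ * a⁻¹) y.1 ∧ Compat a y.2))
    _ = ∑ τ : Equiv.Perm (Fin n), Nat.card
          {y : (Fin n → Fin k) × (Fin n → Fin l) // Compat (σ * τ⁻¹) y.1 ∧ Compat τ y.2} :=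
        nat_card_sigma _
    _ = ∑ τ : Equiv.Perm (Fin n), Nat.card
          ({g : Fin n → Fin k // Compat (σ * τ⁻¹) g} × {f : Fin n → Fin l // Compat τ f}) :=
        Finset.sum_congr rfl (fun τ _ => Nat.card_congr Equiv.subtypeProdEquivProd)
    _ = ∑ τ : Equiv.Perm (Fin n),
          ((n - 1 + k - des (σ * τ⁻¹)).choose n) * ((n - 1 + l - des τ).choose n) :=
        Finset.sum_congr rfl (fun τ _ => by
          rw [Nat.card_prod, card_compat _ hk, card_compat _ hl])

lemma q_identity (σ : Equiv.Perm (Fin n)) {k l : ℕ} (hk : 0 < k) (hl : 0 < l) :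
    ∑ β : Equiv.Perm (Fin n),
      (((n - 1 + k - des (σ * β⁻¹)).choose n : ℚ) / (k : ℚ) ^ n) *
        (((n - 1 + l - des β).choose n : ℚ) / (l : ℚ) ^ n)
    = ((n - 1 + k * l - des σ).choose n : ℚ) / ((k * l : ℕ) : ℚ) ^ n := by
  have key := sum_card σ hk hl
  have keyQ : ∑ β : Equiv.Perm (Fin n),
      (((n - 1 + k - des (σ * β⁻¹)).choose n : ℚ)) *
        (((n - 1 + l - des β).choose n : ℚ))
      = ((n - 1 + k * l - des σ).choose n : ℚ) := by
    exact_mod_cast congrArg (Nat.cast : ℕ → ℚ) key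
  simp_rw [div_mul_div_comm]
  rw [← Finset.sum_div, keyQ]
  congr 1
  push_cast
  rw [mul_pow]

end Stmt9Aux


theorem stmt9 (n k l : ℕ) (hk : 0 < k) (hl : 0 < l) :
    phiPlus n k * phiPlus n l = phiPlus n (k * l) := by
  unfold phiPlus
  rw [Finset.sum_mul_sum]
  simp only [MonoidAlgebra.single_mul_single]
  rw [Finset.sum_comm]
  have step1 : ∀ β : Equiv.Perm (Fin n),
      (∑ α : Equiv.Perm (Fin n), MonoidAlgebra.single (α * β)
        ((((n - 1 + k - des α).choose n : ℚ) / (k : ℚ) ^ n) *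
          (((n - 1 + l - des β).choose n : ℚ) / (l : ℚ) ^ n)))
      = ∑ γ : Equiv.Perm (Fin n), MonoidAlgebra.single γ
        ((((n - 1 + k - des (γ * β⁻¹)).choose n : ℚ) / (k : ℚ) ^ n) *
          (((n - 1 + l - des β).choose n : ℚ) / (l : ℚ) ^ n)) := by
    intro β
    apply Fintype.sum_equiv (Equiv.mulRight β)
    intro α
    simp
  rw [Finset.sum_congr rfl (fun β _ => step1 β), Finset.sum_comm]
  apply Finset.sum_congr rfl
  intro γ _
  have hsingle : ∑ β : Equiv.Perm (Fin n), MonoidAlgebra.single γ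
        ((((n - 1 + k - des (γ * β⁻¹)).choose n : ℚ) / (k : ℚ) ^ n) *
          (((n - 1 + l - des β).choose n : ℚ) / (l : ℚ) ^ n))
      = MonoidAlgebra.single γ (∑ β : Equiv.Perm (Fin n),
        ((((n - 1 + k - des (γ * β⁻¹)).choose n : ℚ) / (k : ℚ) ^ n) *
          (((n - 1 + l - des β).choose n : ℚ) / (l : ℚ) ^ n))) :=
    (map_sum (MonoidAlgebra.singleAddHom γ) _ _).symm
  rw [hsingle, Stmt9Aux.q_identity γ hk hl]
end

section
/- For fixed n and m, define op(n,k;m) = 4^k·Σ_{a≥0} C(n+m-a, n)·C(n-2k, a-k). Then op(n,k;m) ≥ op(n,k+1;m) for all k ≥ 0. -/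
/-- Binomial coefficient for integer arguments, with the convention that it is
zero when `b < 0` or `a < b`. -/
def zchoose (a b : ℤ) : ℤ :=
  if 0 ≤ b ∧ b ≤ a then ((a.toNat).choose b.toNat : ℤ) else 0

/-- The left-enriched order polynomial of a chain on `n` elements with `k` left
peaks, evaluated at `m`:  `4^k · Σ_{a≥0} C(n+m-a, n)·C(n-2k, a-k)`
(reindexed by `a = k + b`; terms with `b > n` vanish). -/
def opL (n k m : ℕ) : ℤ :=
  4 ^ k * ∑ b ∈ Finset.range (n + 1),
    zchoose ((n : ℤ) + m - (k + b)) n * zchoose ((n : ℤ) - 2 * k) b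

/-- The enriched order polynomial of a chain on `n` elements with `k` peaks,
evaluated at `m`: `2·4^k · Σ_{a≥0} C(n-1+m-a, n)·C(n-1-2k, a-k)`
(reindexed by `a = k + b`; terms with `b > n` vanish). -/
def opStar (n k m : ℕ) : ℤ :=
  2 * 4 ^ k * ∑ b ∈ Finset.range (n + 1),
    zchoose ((n : ℤ) - 1 + m - (k + b)) n * zchoose ((n : ℤ) - 1 - 2 * k) b

lemma zchoose_nonneg (a b : ℤ) : 0 ≤ zchoose a b := by
  unfold zchoose; split <;> positivity

lemma zchoose_of_lt (a b : ℤ) (h : a < b) : zchoose a b = 0 := by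
  rw [zchoose, if_neg (by omega)]

lemma zchoose_neg_right (a b : ℤ) (h : b < 0) : zchoose a b = 0 := by
  rw [zchoose, if_neg (by omega)]

lemma zchoose_eq (a b : ℤ) (ha : 0 ≤ a) (hb : 0 ≤ b) :
    zchoose a b = ((a.toNat).choose b.toNat : ℤ) := by
  unfold zchoose; split_ifs with h
  · rfl
  · rw [Nat.choose_eq_zero_of_lt (by omega)]; rfl

lemma zchoose_pascal (x b : ℤ) (h : b ≠ 0 ∨ x ≠ 0) :
    zchoose x b = zchoose (x-1) b + zchoose (x-1) (b-1) := by
  rcases lt_trichotomy b 0 with hb | hb | hb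
  · rw [zchoose_neg_right _ _ hb, zchoose_neg_right _ _ hb,
      zchoose_neg_right _ _ (by omega)]; ring
  · subst hb
    have hx : x ≠ 0 := h.resolve_left (by simp)
    rcases lt_or_ge x 0 with hx0 | hx0
    · rw [zchoose_of_lt _ _ (by omega), zchoose_of_lt _ _ (by omega),
        zchoose_neg_right _ _ (by omega)]; ring
    · rw [zchoose_eq _ _ (by omega) le_rfl, zchoose_eq _ _ (by omega) le_rfl,
        zchoose_neg_right _ _ (by omega)]
      simp
  · rcases lt_or_ge x 1 with hx | hx
    · rw [zchoose_of_lt _ _ (by omega), zchoose_of_lt _ _ (by omega),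
        zchoose_of_lt _ _ (by omega)]; ring
    · rw [zchoose_eq _ _ (by omega) (by omega), zchoose_eq _ _ (by omega) (by omega),
        zchoose_eq _ _ (by omega) (by omega)]
      have hx' : x.toNat = (x-1).toNat + 1 := by omega
      have hb' : b.toNat = (b-1).toNat + 1 := by omega
      rw [hx', hb', Nat.choose_succ_succ]
      push_cast; ring

lemma sum_shift (n : ℕ) (f : ℕ → ℤ) (g : ℤ → ℤ) (h0 : g (-1) = 0) (hn : g n = 0) :
    ∑ b ∈ Finset.range (n+1), f b * g ((b:ℤ)-1)
      = ∑ b ∈ Finset.range (n+1), f (b+1) * g b := by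
  rw [Finset.sum_range_succ' (fun b => f b * g ((b:ℤ)-1)) n,
    Finset.sum_range_succ (fun b => f (b+1) * g b) n]
  simp only [Nat.cast_zero, zero_sub, h0, mul_zero, add_zero, Nat.cast_ofNat, hn]
  refine Finset.sum_congr rfl fun b _ => ?_
  push_cast; ring_nf


theorem stmt12 (n m k : ℕ) : opL n (k + 1) m ≤ opL n k m := by
  by_cases hn : n < 2*k + 2
  · have h1 : opL n (k+1) m = 0 := by
      unfold opL
      rw [Finset.sum_eq_zero, mul_zero]
      intro b _
      exact mul_eq_zero_of_right _ (zchoose_of_lt _ _ (by push_cast; omega))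
    have h2 : 0 ≤ opL n k m := by
      unfold opL
      exact mul_nonneg (by positivity) (Finset.sum_nonneg fun b _ =>
        mul_nonneg (zchoose_nonneg _ _) (zchoose_nonneg _ _))
    omega
  · push_neg at hn
    set c : ℤ := (n:ℤ) - 2*k - 2 with hc
    set F : ℤ → ℤ := fun x => zchoose ((n:ℤ) + m - k - x) n with hF
    set f : ℕ → ℤ := fun b => F b with hf
    set S0 : ℤ := ∑ b ∈ Finset.range (n+1), f b * zchoose c b with hS0
    set S1 : ℤ := ∑ b ∈ Finset.range (n+1), f (b+1) * zchoose c b with hS1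
    set S2 : ℤ := ∑ b ∈ Finset.range (n+1), f (b+2) * zchoose c b with hS2
    have hcn : c < (n:ℤ) := by omega
    have hcn1 : c < (n:ℤ) - 1 := by omega
    have shift1 : ∑ b ∈ Finset.range (n+1), f b * zchoose c ((b:ℤ)-1) = S1 :=
      sum_shift n f (fun x => zchoose c x) (zchoose_neg_right _ _ (by omega))
        (zchoose_of_lt _ _ hcn)
    have shift2 : ∑ b ∈ Finset.range (n+1), f b * zchoose c ((b:ℤ)-2) = S2 := by
      calc ∑ b ∈ Finset.range (n+1), f b * zchoose c ((b:ℤ)-2)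
          = ∑ b ∈ Finset.range (n+1), f b * zchoose c ((b:ℤ)-1-1) := by
            refine Finset.sum_congr rfl fun b _ => ?_
            rw [show (b:ℤ)-1-1 = (b:ℤ)-2 by ring]
        _ = ∑ b ∈ Finset.range (n+1), f (b+1) * zchoose c ((b:ℤ)-1) :=
            sum_shift n f (fun x => zchoose c (x-1))
              (zchoose_neg_right _ _ (by omega))
              (zchoose_of_lt _ _ hcn1)
        _ = ∑ b ∈ Finset.range (n+1), f (b+1+1) * zchoose c (b:ℤ) :=
            sum_shift n (fun b => f (b+1)) (fun x => zchoose c x)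
              (zchoose_neg_right _ _ (by omega))
              (zchoose_of_lt _ _ hcn)
        _ = S2 := Finset.sum_congr rfl fun b _ => by norm_num
    -- expansion of zchoose ((n:ℤ) - 2*k) b via double Pascal
    have expand : ∀ b : ℤ, zchoose ((n:ℤ) - 2*k) b
        = zchoose c b + 2 * zchoose c (b-1) + zchoose c (b-2) := by
      intro b
      have hX : (n:ℤ) - 2*k - 1 - 1 = c := by ring
      have h1 := zchoose_pascal ((n:ℤ) - 2*k) b (Or.inr (by omega))
      have h2 := zchoose_pascal ((n:ℤ) - 2*k - 1) b (Or.inr (by omega))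
      have h3 := zchoose_pascal ((n:ℤ) - 2*k - 1) (b-1) (Or.inr (by omega))
      rw [hX] at h2 h3
      rw [show b - 1 - 1 = b - 2 by ring] at h3
      linarith
    -- opL n k m in terms of S0, S1, S2
    have e1 : opL n k m = 4^k * (S0 + 2*S1 + S2) := by
      unfold opL
      congr 1
      calc ∑ b ∈ Finset.range (n+1),
            zchoose ((n:ℤ) + m - (k + b)) n * zchoose ((n:ℤ) - 2*k) b
          = ∑ b ∈ Finset.range (n+1),
            (f b * zchoose c (b:ℤ) + 2 * (f b * zchoose c ((b:ℤ)-1))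
              + f b * zchoose c ((b:ℤ)-2)) := by
            refine Finset.sum_congr rfl fun b _ => ?_
            rw [expand (b:ℤ), show (n:ℤ) + m - (k + b) = (n:ℤ) + m - k - b by ring]
            simp only [hf, hF]
            ring
        _ = S0 + 2*S1 + S2 := by
            rw [Finset.sum_add_distrib, Finset.sum_add_distrib, ← Finset.mul_sum,
              shift1, shift2, hS0]
    have e2 : opL n (k+1) m = 4^k * (4 * S1) := by
      unfold opL
      rw [hS1,
        show (4:ℤ)^k * (4 * ∑ b ∈ Finset.range (n+1), f (b+1) * zchoose c (b:ℤ))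
          = ∑ b ∈ Finset.range (n+1), 4^k * (4 * (f (b+1) * zchoose c (b:ℤ)))
          by rw [Finset.mul_sum, Finset.mul_sum],
        Finset.mul_sum]
      refine Finset.sum_congr rfl fun b _ => ?_
      simp only [hf, hF]
      push_cast
      rw [show (n:ℤ) + m - (k + 1 + b) = (n:ℤ) + m - k - (b+1) by ring,
        show (n:ℤ) - 2*(k+1) = c by rw [hc]; ring]
      ring
    have e3 : 0 ≤ S0 - 2*S1 + S2 := by
      have keysum : S0 - 2*S1 + S2 = ∑ b ∈ Finset.range (n+1),
          zchoose ((n:ℤ) + m - k - b - 2) ((n:ℤ) - 2) * zchoose c b := by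
        rw [hS0, hS1, hS2,
          show (2:ℤ) * ∑ b ∈ Finset.range (n+1), f (b+1) * zchoose c (b:ℤ)
            = ∑ b ∈ Finset.range (n+1), 2 * (f (b+1) * zchoose c (b:ℤ))
            from Finset.mul_sum _ _ _,
          ← Finset.sum_sub_distrib, ← Finset.sum_add_distrib]
        refine Finset.sum_congr rfl fun b _ => ?_
        have hy : (n:ℤ) + m - k - ↑(b+1) = (n:ℤ) + m - k - b - 1 := by push_cast; ring
        have hy2 : (n:ℤ) + m - k - ↑(b+2) = (n:ℤ) + m - k - b - 2 := by push_cast; ring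
        have p1 := zchoose_pascal ((n:ℤ) + m - k - b) (n:ℤ) (Or.inl (by omega))
        have p2 := zchoose_pascal ((n:ℤ) + m - k - b - 1) (n:ℤ) (Or.inl (by omega))
        have p3 := zchoose_pascal ((n:ℤ) + m - k - b - 1) ((n:ℤ)-1) (Or.inl (by omega))
        rw [show (n:ℤ) + m - k - b - 1 - 1 = (n:ℤ) + m - k - b - 2 by ring] at p2 p3
        rw [show (n:ℤ) - 1 - 1 = (n:ℤ) - 2 by ring] at p3
        simp only [hf, hF, hy, hy2]
        have key : zchoose ((n:ℤ) + m - k - b) n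
            - 2 * zchoose ((n:ℤ) + m - k - b - 1) n
            + zchoose ((n:ℤ) + m - k - b - 2) n
            = zchoose ((n:ℤ) + m - k - b - 2) ((n:ℤ) - 2) := by linarith
        linear_combination zchoose c (b:ℤ) * key
      rw [keysum]
      exact Finset.sum_nonneg fun b _ =>
        mul_nonneg (zchoose_nonneg _ _) (zchoose_nonneg _ _)
    have h4 : (0:ℤ) ≤ 4^k * (S0 - 2*S1 + S2) := mul_nonneg (by positivity) e3
    linarith [e1, e2, h4]
end
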